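/- arXiv:1602.03111 — 4 statements merged into one kernel-verified Lean document; each statement's English description precedes it below -/
import Mathlib

section
/- Let G be a bidirected tree with seed set S and boost set B, and assume that every non-seed node is activated with probability strictly less than one (ap_B(w) < 1 for all w ∉ S). Then for every non-seed node u and every neighbor v of u, one has 1 − ap_B(v\u) · p^B_{vu} > 0 and ap_B(u\v) = 1 − (1 − ap_B(u)) / (1 − ap_B(v\u) · p^B_{vu}). -/
open Finset
open scoped Classical

noncomputable section

variable {V : Type*}

/-- The probability weight of the live-edge configuration `L ⊆ E`:
each edge `e ∈ E` is independently live with probability `p e`. -/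
def edgeWeight [DecidableEq V] (E : Finset (V × V)) (p : V × V → ℝ)
    (L : Finset (V × V)) : ℝ :=
  (∏ e ∈ L, p e) * ∏ e ∈ E \ L, (1 - p e)

/-- `v` is activated in configuration `L`: it is reachable from some seed in `S`
through live (directed) edges. -/
def Reaches (L : Finset (V × V)) (S : Finset V) (v : V) : Prop :=
  ∃ s ∈ S, Relation.ReflTransGen (fun a b => (a, b) ∈ L) s v

/-- Activation probability of node `v` under the live-edge model with edge set `E`,
edge probabilities `p`, and seed set `S`. -/
def ap [Fintype V] [DecidableEq V] (E : Finset (V × V)) (p : V × V → ℝ)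
    (S : Finset V) (v : V) : ℝ :=
  ∑ L ∈ E.powerset, edgeWeight E p L * (if Reaches L S v then 1 else 0)

/-- Expected number of activated nodes lying in the node set `W`. -/
def spreadOn [Fintype V] [DecidableEq V] (E : Finset (V × V)) (p : V × V → ℝ)
    (S W : Finset V) : ℝ :=
  ∑ L ∈ E.powerset, edgeWeight E p L * ((W.filter (fun v => Reaches L S v)).card : ℝ)

/-- The influence spread `σ_S`: expected total number of activated nodes. -/
def spread [Fintype V] [DecidableEq V] (E : Finset (V × V)) (p : V × V → ℝ)
    (S : Finset V) : ℝ :=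
  spreadOn E p S Finset.univ

/-- Boosted edge probabilities: edges pointing into a boosted node use `p'`. -/
def pB (p p' : V × V → ℝ) (B : Finset V) : V × V → ℝ :=
  fun e => if e.2 ∈ B then p' e else p e

/-- The bidirected edge set of an undirected graph: each undirected edge is
replaced by the two directed edges. -/
def treeEdges [Fintype V] [DecidableEq V] (T : SimpleGraph V) [DecidableRel T.Adj] :
    Finset (V × V) :=
  Finset.univ.filter (fun e => T.Adj e.1 e.2)

/-- `apSub E p S v u` is `ap_B(v\u)`: the activation probability of `v` in the
subtree `G_{v\u}` obtained by removing the directed edges `(u,v)` and `(v,u)`. -/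
def apSub [Fintype V] [DecidableEq V] (E : Finset (V × V)) (p : V × V → ℝ)
    (S : Finset V) (v u : V) : ℝ :=
  ap (E \ {(u, v), (v, u)}) p S v

/-- The set of nodes of the connected component containing `v` w.r.t. edge set `E`. -/
def comp [Fintype V] [DecidableEq V] (E : Finset (V × V)) (v : V) : Finset V :=
  Finset.univ.filter (fun w => Relation.ReflTransGen (fun a b => (a, b) ∈ E) v w)

/-- `gain E p S v u` is `g_B(v\u)`: in the subtree `G_{v\u}`, the expected number of
activated nodes when the seed set is `(S ∩ V(G_{v\u})) ∪ {v}` minus the expected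
number when the seed set is `S ∩ V(G_{v\u})`. -/
def gain [Fintype V] [DecidableEq V] (E : Finset (V × V)) (p : V × V → ℝ)
    (S : Finset V) (v u : V) : ℝ :=
  spreadOn (E \ {(u, v), (v, u)}) p (insert v (S ∩ comp (E \ {(u, v), (v, u)}) v))
      (comp (E \ {(u, v), (v, u)}) v)
    - spreadOn (E \ {(u, v), (v, u)}) p (S ∩ comp (E \ {(u, v), (v, u)}) v)
      (comp (E \ {(u, v), (v, u)}) v)

section IBAux

variable [Fintype V] [DecidableEq V]

namespace IB
set_option linter.unusedSectionVars false

variable [Fintype V] [DecidableEq V]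

lemma sum_edgeWeight (E : Finset (V × V)) (q : V × V → ℝ) :
    ∑ L ∈ E.powerset, edgeWeight E q L = 1 := by
  have h := Finset.prod_add (fun e => q e) (fun e => 1 - q e) E
  have h2 : ∀ e ∈ E, q e + (1 - q e) = 1 := fun e _ => by ring
  rw [Finset.prod_congr rfl h2, Finset.prod_const_one] at h
  simp only [edgeWeight]
  exact h.symm

lemma edgeWeight_nonneg {E : Finset (V × V)} {q : V × V → ℝ}
    (h0 : ∀ e, 0 ≤ q e) (h1 : ∀ e, q e ≤ 1) (L : Finset (V × V)) :
    0 ≤ edgeWeight E q L :=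
  mul_nonneg (Finset.prod_nonneg fun e _ => h0 e)
    (Finset.prod_nonneg fun e _ => by linarith [h1 e])

lemma ap_nonneg {E : Finset (V × V)} {q : V × V → ℝ}
    (h0 : ∀ e, 0 ≤ q e) (h1 : ∀ e, q e ≤ 1) (S : Finset V) (v : V) :
    0 ≤ ap E q S v :=
  Finset.sum_nonneg fun L _ => mul_nonneg (edgeWeight_nonneg h0 h1 L)
    (by split <;> norm_num)

lemma ap_le_one {E : Finset (V × V)} {q : V × V → ℝ}
    (h0 : ∀ e, 0 ≤ q e) (h1 : ∀ e, q e ≤ 1) (S : Finset V) (v : V) :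
    ap E q S v ≤ 1 := by
  rw [← sum_edgeWeight E q]
  refine Finset.sum_le_sum fun L _ => ?_
  have := edgeWeight_nonneg h0 h1 (E := E) L
  have : edgeWeight E q L * (if Reaches L S v then (1:ℝ) else 0) ≤ edgeWeight E q L * 1 := by
    apply mul_le_mul_of_nonneg_left _ this
    split <;> norm_num
  simpa using this

lemma edgeWeight_union {A B L1 L2 : Finset (V × V)} (q : V × V → ℝ)
    (hd : Disjoint A B) (h1 : L1 ⊆ A) (h2 : L2 ⊆ B) :
    edgeWeight (A ∪ B) q (L1 ∪ L2) = edgeWeight A q L1 * edgeWeight B q L2 := by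
  have hdL : Disjoint L1 L2 := hd.mono h1 h2
  have hDD : Disjoint (A \ L1) (B \ L2) := hd.mono sdiff_subset sdiff_subset
  have hAB : ∀ e, e ∈ A → e ∈ B → False := fun e ha hb => Finset.disjoint_left.mp hd ha hb
  have hsd : (A ∪ B) \ (L1 ∪ L2) = (A \ L1) ∪ (B \ L2) := by
    ext e
    simp only [Finset.mem_sdiff, Finset.mem_union]
    constructor
    · rintro ⟨h | h, hn⟩
      · exact Or.inl ⟨h, fun hc => hn (Or.inl hc)⟩
      · exact Or.inr ⟨h, fun hc => hn (Or.inr hc)⟩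
    · rintro (⟨h, hn⟩ | ⟨h, hn⟩)
      · exact ⟨Or.inl h, fun hc => hc.elim hn (fun h2' => hAB e h (h2 h2'))⟩
      · exact ⟨Or.inr h, fun hc => hc.elim (fun h1' => hAB e (h1 h1') h) hn⟩
  simp only [edgeWeight, hsd, Finset.prod_union hdL, Finset.prod_union hDD]
  ring

lemma union_inter_left {A B L1 L2 : Finset (V × V)} (hd : Disjoint A B)
    (h1 : L1 ⊆ A) (h2 : L2 ⊆ B) : (L1 ∪ L2) ∩ A = L1 := by
  ext e
  simp only [Finset.mem_inter, Finset.mem_union]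
  constructor
  · rintro ⟨h | h, hA⟩
    · exact h
    · exact absurd (h2 h) (Finset.disjoint_left.mp hd hA)
  · intro h
    exact ⟨Or.inl h, h1 h⟩

lemma union_inter_right {A B L1 L2 : Finset (V × V)} (hd : Disjoint A B)
    (h1 : L1 ⊆ A) (h2 : L2 ⊆ B) : (L1 ∪ L2) ∩ B = L2 := by
  rw [Finset.union_comm]
  exact union_inter_left hd.symm h2 h1

lemma split_sum (A B : Finset (V × V)) (hd : Disjoint A B) (q : V × V → ℝ)
    (H : Finset (V × V) → Finset (V × V) → ℝ) :
    ∑ L ∈ (A ∪ B).powerset, edgeWeight (A ∪ B) q L * H (L ∩ A) (L ∩ B)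
      = ∑ L1 ∈ A.powerset, ∑ L2 ∈ B.powerset,
          edgeWeight A q L1 * edgeWeight B q L2 * H L1 L2 := by
  rw [← Finset.sum_product']
  refine Finset.sum_bij' (fun L _ => (L ∩ A, L ∩ B)) (fun P _ => P.1 ∪ P.2)
    ?_ ?_ ?_ ?_ ?_
  · intro L hL
    simp only [Finset.mem_product, Finset.mem_powerset]
    exact ⟨Finset.inter_subset_right, Finset.inter_subset_right⟩
  · intro P hP
    simp only [Finset.mem_product, Finset.mem_powerset] at hP
    exact Finset.mem_powerset.mpr (Finset.union_subset_union hP.1 hP.2)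
  · intro L hL
    have hL' := Finset.mem_powerset.mp hL
    simp only
    rw [← Finset.inter_union_distrib_left, Finset.inter_eq_left.mpr hL']
  · intro P hP
    simp only [Finset.mem_product, Finset.mem_powerset] at hP
    obtain ⟨h1, h2⟩ := hP
    rw [union_inter_left hd h1 h2, union_inter_right hd h1 h2]
  · intro L hL
    have hL' := Finset.mem_powerset.mp hL
    have hunion : (L ∩ A) ∪ (L ∩ B) = L := by
      rw [← Finset.inter_union_distrib_left, Finset.inter_eq_left.mpr hL']
    simp only
    conv_lhs => rw [← hunion]
    rw [edgeWeight_union q hd Finset.inter_subset_right Finset.inter_subset_right, hunion]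

lemma double_eval (A B : Finset (V × V)) (q : V × V → ℝ) (f g : Finset (V × V) → ℝ) :
    ∑ L1 ∈ A.powerset, ∑ L2 ∈ B.powerset,
        edgeWeight A q L1 * edgeWeight B q L2 * (f L1 * g L2)
      = (∑ L1 ∈ A.powerset, edgeWeight A q L1 * f L1) *
        (∑ L2 ∈ B.powerset, edgeWeight B q L2 * g L2) := by
  rw [Finset.sum_mul_sum]
  exact Finset.sum_congr rfl fun L1 _ => Finset.sum_congr rfl fun L2 _ => by ring

lemma powerset_singleton (e : V × V) :
    ({e} : Finset (V × V)).powerset = {∅, {e}} := by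
  ext t
  simp [Finset.subset_singleton_iff]

lemma sum_singleton_indicator (e : V × V) (q : V × V → ℝ) :
    ∑ L ∈ ({e} : Finset (V × V)).powerset,
        edgeWeight {e} q L * (if e ∈ L then (1:ℝ) else 0) = q e := by
  rw [powerset_singleton, Finset.sum_pair (Finset.singleton_ne_empty e).symm]
  simp [edgeWeight]

lemma sum_indicator_pair {a b : V × V} (hab : a ≠ b) (q : V × V → ℝ) :
    ∑ L ∈ ({a, b} : Finset (V × V)).powerset,
        edgeWeight {a, b} q L * (if b ∈ L then (1:ℝ) else 0) = q b := by
  have hins : ({a, b} : Finset (V × V)) = {a} ∪ {b} := by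
    rw [Finset.insert_eq]
  have hd : Disjoint ({a} : Finset (V × V)) {b} := by
    simp [Finset.disjoint_left, hab]
  have hmem : ∀ L ∈ ({a} ∪ {b} : Finset (V × V)).powerset,
      edgeWeight ({a} ∪ {b}) q L * (if b ∈ L then (1:ℝ) else 0)
        = edgeWeight ({a} ∪ {b}) q L *
            ((fun X => (1:ℝ)) (L ∩ {a}) * (fun Y => if b ∈ Y then (1:ℝ) else 0) (L ∩ {b})) := by
    intro L _
    simp only [one_mul]
    congr 1
    have : b ∈ L ∩ {b} ↔ b ∈ L := by simp
    exact if_congr this.symm rfl rfl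
  rw [hins, Finset.sum_congr rfl hmem,
    split_sum {a} {b} hd q (fun X Y => (1:ℝ) * (if b ∈ Y then (1:ℝ) else 0))]
  have := double_eval {a} {b} q (fun _ => (1:ℝ)) (fun Y => if b ∈ Y then (1:ℝ) else 0)
  rw [this]
  have h1 : ∑ L1 ∈ ({a} : Finset (V × V)).powerset, edgeWeight {a} q L1 * 1 = 1 := by
    simpa using sum_edgeWeight {a} q
  rw [h1, one_mul, sum_singleton_indicator]

lemma inner_eval {a b : V × V} (hab : a ≠ b) (q : V × V → ℝ) (P Q : Prop) :
    ∑ L2 ∈ ({a, b} : Finset (V × V)).powerset,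
        edgeWeight {a, b} q L2 * (if (P ∨ (b ∈ L2 ∧ Q)) then (1:ℝ) else 0)
      = if P then 1 else if Q then q b else 0 := by
  by_cases hP : P
  · simp only [hP, true_or, if_true]
    simpa using sum_edgeWeight {a, b} q
  · by_cases hQ : Q
    · simp only [hP, hQ, if_false, if_true, and_true, false_or]
      exact sum_indicator_pair hab q
    · simp only [hP, hQ, and_false, false_or, if_false]
      simp

/-- Monotonicity of reachability in the live-edge set. -/
lemma reaches_mono {L L' : Finset (V × V)} (h : L ⊆ L') {S : Finset V} {v : V} :
    Reaches L S v → Reaches L' S v := by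
  rintro ⟨s, hs, hr⟩
  exact ⟨s, hs, Relation.ReflTransGen.mono (fun a b hab => h hab) s v hr⟩

lemma rtg_split {L : Finset (V × V)} {u v x : V}
    (h : Relation.ReflTransGen (fun a c => (a, c) ∈ L) x u) :
    Relation.ReflTransGen (fun a c => (a, c) ∈ L \ ({(u, v), (v, u)} : Finset (V × V))) x u ∨
      ((v, u) ∈ L ∧
        Relation.ReflTransGen
          (fun a c => (a, c) ∈ L \ ({(u, v), (v, u)} : Finset (V × V))) x v) := by
  induction h using Relation.ReflTransGen.head_induction_on with
  | refl => exact Or.inl .refl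
  | @head a c step h ih =>
    by_cases h1 : (a, c) = (u, v)
    · obtain ⟨rfl, rfl⟩ : a = u ∧ c = v := Prod.mk.injEq .. ▸ h1
      exact Or.inl .refl
    · by_cases h2 : (a, c) = (v, u)
      · obtain ⟨rfl, rfl⟩ : a = v ∧ c = u := Prod.mk.injEq .. ▸ h2
        exact Or.inr ⟨step, .refl⟩
      · have hmem : (a, c) ∈ L \ ({(u, v), (v, u)} : Finset (V × V)) := by
          rw [Finset.mem_sdiff]
          exact ⟨step, by simp [h1, h2]⟩
        rcases ih with h' | ⟨hb, h'⟩
        · exact Or.inl (h'.head hmem)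
        · exact Or.inr ⟨hb, h'.head hmem⟩

lemma reaches_split {L : Finset (V × V)} {S : Finset V} {u v : V} :
    Reaches L S u ↔
      (Reaches (L \ ({(u, v), (v, u)} : Finset (V × V))) S u ∨
        ((v, u) ∈ L ∧ Reaches (L \ ({(u, v), (v, u)} : Finset (V × V))) S v)) := by
  constructor
  · rintro ⟨s, hs, hr⟩
    rcases rtg_split (v := v) hr with h | ⟨hb, h⟩
    · exact Or.inl ⟨s, hs, h⟩
    · exact Or.inr ⟨hb, s, hs, h⟩
  · rintro (h | ⟨hb, s, hs, h⟩)
    · exact reaches_mono Finset.sdiff_subset h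
    · exact ⟨s, hs, (Relation.ReflTransGen.mono (fun a c hac => (Finset.mem_sdiff.mp hac).1) s v h).tail hb⟩

lemma mem_comp_self (E : Finset (V × V)) (z : V) : z ∈ comp E z := by
  simp only [comp, Finset.mem_filter, Finset.mem_univ, true_and]
  exact .refl

lemma comp_step {E : Finset (V × V)} {z x y : V} (hy : y ∈ comp E z)
    (h : (y, x) ∈ E) : x ∈ comp E z := by
  simp only [comp, Finset.mem_filter, Finset.mem_univ, true_and] at hy ⊢
  exact hy.tail h

lemma localize {E' : Finset (V × V)} {L : Finset (V × V)} (hL : L ⊆ E')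
    (hsym : ∀ x y, (x, y) ∈ E' → (y, x) ∈ E') (z : V) {x w : V}
    (h : Relation.ReflTransGen (fun a c => (a, c) ∈ L) x w) (hw : w ∈ comp E' z) :
    x ∈ comp E' z ∧
      Relation.ReflTransGen
        (fun a c => (a, c) ∈ L.filter (fun e => e.1 ∈ comp E' z)) x w := by
  induction h with
  | refl => exact ⟨hw, .refl⟩
  | @tail m c hxm step ih =>
    have hcm : (c, m) ∈ E' := hsym m c (hL step)
    have hm : m ∈ comp E' z := comp_step hw hcm
    obtain ⟨hx, hr⟩ := ih hm
    refine ⟨hx, hr.tail ?_⟩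
    exact Finset.mem_filter.mpr ⟨step, hm⟩

lemma reaches_localize {E' : Finset (V × V)}
    (hsym : ∀ x y, (x, y) ∈ E' → (y, x) ∈ E') {L : Finset (V × V)} (hL : L ⊆ E')
    (S : Finset V) (z : V) :
    Reaches L S z ↔ Reaches (L ∩ E'.filter (fun e => e.1 ∈ comp E' z)) S z := by
  constructor
  · rintro ⟨s, hs, hr⟩
    obtain ⟨hx, hr'⟩ := localize hL hsym z hr (mem_comp_self E' z)
    refine ⟨s, hs, Relation.ReflTransGen.mono (fun a c hac => ?_) s z hr'⟩
    have h1 := Finset.mem_filter.mp hac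
    exact Finset.mem_inter.mpr ⟨h1.1, Finset.mem_filter.mpr ⟨hL h1.1, h1.2⟩⟩
  · exact reaches_mono Finset.inter_subset_left

variable {T : SimpleGraph V} [DecidableRel T.Adj]

lemma mem_E' {u v : V} {e : V × V} :
    e ∈ treeEdges T \ ({(u, v), (v, u)} : Finset (V × V)) ↔
      T.Adj e.1 e.2 ∧ e ≠ (u, v) ∧ e ≠ (v, u) := by
  simp [treeEdges, Finset.mem_sdiff, Finset.mem_filter, not_or]

lemma E'_symm {u v x y : V}
    (h : (x, y) ∈ treeEdges T \ ({(u, v), (v, u)} : Finset (V × V))) :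
    (y, x) ∈ treeEdges T \ ({(u, v), (v, u)} : Finset (V × V)) := by
  rw [mem_E'] at h ⊢
  obtain ⟨hadj, h1, h2⟩ := h
  refine ⟨hadj.symm, ?_, ?_⟩
  · intro hc
    apply h2
    simp only [Prod.mk.injEq] at hc ⊢
    exact ⟨hc.2, hc.1⟩
  · intro hc
    apply h1
    simp only [Prod.mk.injEq] at hc ⊢
    exact ⟨hc.2, hc.1⟩

lemma cover_aux (u v : V) {x y : V} (w : T.Walk x y)
    (hy : y ∈ comp (treeEdges T \ ({(u, v), (v, u)} : Finset (V × V))) u ∨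
      y ∈ comp (treeEdges T \ ({(u, v), (v, u)} : Finset (V × V))) v) :
    x ∈ comp (treeEdges T \ ({(u, v), (v, u)} : Finset (V × V))) u ∨
      x ∈ comp (treeEdges T \ ({(u, v), (v, u)} : Finset (V × V))) v := by
  induction w with
  | nil => exact hy
  | cons hadj p ih =>
    rename_i x' y' _
    have ih' := ih hy
    by_cases h1 : (x', y') = (u, v)
    · obtain ⟨rfl, rfl⟩ : x' = u ∧ y' = v := Prod.mk.injEq .. ▸ h1
      exact Or.inl (mem_comp_self _ _)
    · by_cases h2 : (x', y') = (v, u)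
      · obtain ⟨rfl, rfl⟩ : x' = v ∧ y' = u := Prod.mk.injEq .. ▸ h2
        exact Or.inr (mem_comp_self _ _)
      · have hmem : (x', y') ∈ treeEdges T \ ({(u, v), (v, u)} : Finset (V × V)) :=
          mem_E'.mpr ⟨hadj, h1, h2⟩
        have hmem' := E'_symm hmem
        rcases ih' with h | h
        · exact Or.inl (comp_step h hmem')
        · exact Or.inr (comp_step h hmem')

lemma cover (hc : T.Connected) (u v x : V) :
    x ∈ comp (treeEdges T \ ({(u, v), (v, u)} : Finset (V × V))) u ∨
      x ∈ comp (treeEdges T \ ({(u, v), (v, u)} : Finset (V × V))) v := by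
  obtain ⟨w⟩ := hc.preconnected x u
  exact cover_aux u v w (Or.inl (mem_comp_self _ _))

lemma rtg_to_reachable (u v : V) {x y : V}
    (h : Relation.ReflTransGen
      (fun a b => (a, b) ∈ treeEdges T \ ({(u, v), (v, u)} : Finset (V × V))) x y) :
    (T \ SimpleGraph.fromEdgeSet {s(u, v)}).Reachable x y := by
  induction h with
  | refl => exact SimpleGraph.Reachable.refl x
  | @tail m c hxm step ih =>
    refine ih.trans (SimpleGraph.Adj.reachable ?_)
    rw [mem_E'] at step
    obtain ⟨hadj, h1, h2⟩ := step
    rw [SimpleGraph.sdiff_adj, SimpleGraph.fromEdgeSet_adj]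
    refine ⟨hadj, ?_⟩
    rintro ⟨hmem, -⟩
    simp only [Set.mem_singleton_iff] at hmem
    rcases Sym2.eq_iff.mp hmem with ⟨rfl, rfl⟩ | ⟨rfl, rfl⟩
    · exact h1 rfl
    · exact h2 rfl

lemma not_reach (hT : T.IsTree) {u v : V} (hv : T.Adj u v) :
    v ∉ comp (treeEdges T \ ({(u, v), (v, u)} : Finset (V × V))) u := by
  intro h
  simp only [comp, Finset.mem_filter, Finset.mem_univ, true_and] at h
  have hbr :=
    (SimpleGraph.isAcyclic_iff_forall_edge_isBridge.mp hT.IsAcyclic)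
      (T.mem_edgeSet.mpr hv)
  exact (SimpleGraph.isBridge_iff.mp hbr) (rtg_to_reachable u v h)

lemma comp_disjoint (hT : T.IsTree) {u v : V} (hv : T.Adj u v) :
    Disjoint (comp (treeEdges T \ ({(u, v), (v, u)} : Finset (V × V))) u)
      (comp (treeEdges T \ ({(u, v), (v, u)} : Finset (V × V))) v) := by
  set E' := treeEdges T \ ({(u, v), (v, u)} : Finset (V × V)) with hE'
  rw [Finset.disjoint_left]
  intro x hxu hxv
  apply not_reach hT hv
  simp only [comp, Finset.mem_filter, Finset.mem_univ, true_and] at hxu hxv ⊢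
  have hsym : Symmetric (fun a b => (a, b) ∈ E') := fun a b h => E'_symm h
  haveI : Std.Symm (fun a b : V => (a, b) ∈ E') := ⟨hsym⟩
  have hxv' := (Relation.ReflTransGen.stdSymm (r := fun a b : V => (a, b) ∈ E')).symm _ _ hxv
  exact hxu.trans hxv'

lemma eval_both (A B : Finset (V × V)) (hd : Disjoint A B) (q : V × V → ℝ)
    (f g : Finset (V × V) → ℝ) :
    ∑ L ∈ (A ∪ B).powerset, edgeWeight (A ∪ B) q L * (f (L ∩ A) * g (L ∩ B))
      = (∑ L1 ∈ A.powerset, edgeWeight A q L1 * f L1) *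
        (∑ L2 ∈ B.powerset, edgeWeight B q L2 * g L2) := by
  rw [split_sum A B hd q (fun X Y => f X * g Y)]
  exact double_eval A B q f g

lemma eval_left (A B : Finset (V × V)) (hd : Disjoint A B) (q : V × V → ℝ)
    (f : Finset (V × V) → ℝ) :
    ∑ L ∈ (A ∪ B).powerset, edgeWeight (A ∪ B) q L * f (L ∩ A)
      = ∑ L1 ∈ A.powerset, edgeWeight A q L1 * f L1 := by
  have h := eval_both A B hd q f (fun _ => 1)
  simp only [mul_one, one_mul] at h
  rw [h, sum_edgeWeight B q, mul_one]

lemma eval_right (A B : Finset (V × V)) (hd : Disjoint A B) (q : V × V → ℝ)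
    (g : Finset (V × V) → ℝ) :
    ∑ L ∈ (A ∪ B).powerset, edgeWeight (A ∪ B) q L * g (L ∩ B)
      = ∑ L2 ∈ B.powerset, edgeWeight B q L2 * g L2 := by
  have h := eval_both A B hd q (fun _ => 1) g
  simp only [mul_one, one_mul] at h
  rw [h, sum_edgeWeight A q, one_mul]

lemma ite_identity (c : ℝ) (P Q : Prop) :
    (if P then (1:ℝ) else if Q then c else 0)
      = (if P then (1:ℝ) else 0) + (1 - (if P then (1:ℝ) else 0)) * c * (if Q then (1:ℝ) else 0) := by
  by_cases hP : P <;> by_cases hQ : Q <;> simp [hP, hQ]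

lemma key {T : SimpleGraph V} [DecidableRel T.Adj] (hT : T.IsTree)
    (q : V × V → ℝ) (S : Finset V) {u v : V} (hv : T.Adj u v) :
    ap (treeEdges T) q S u =
      ap (treeEdges T \ ({(u, v), (v, u)} : Finset (V × V))) q S u
        + (1 - ap (treeEdges T \ ({(u, v), (v, u)} : Finset (V × V))) q S u) * q (v, u)
          * ap (treeEdges T \ ({(u, v), (v, u)} : Finset (V × V))) q S v := by
  have huv : u ≠ v := T.ne_of_adj hv
  have hab : ((u, v) : V × V) ≠ (v, u) := by
    simp only [Ne, Prod.mk.injEq, not_and]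
    intro h; exact absurd h huv
  set E' : Finset (V × V) := treeEdges T \ ({(u, v), (v, u)} : Finset (V × V)) with hE'
  have haE : ((u, v) : V × V) ∈ treeEdges T := by
    simp [treeEdges, hv]
  have hbE : ((v, u) : V × V) ∈ treeEdges T := by
    simp [treeEdges, hv.symm]
  have hP2sub : ({(u, v), (v, u)} : Finset (V × V)) ⊆ treeEdges T := by
    intro e he
    rcases Finset.mem_insert.mp he with rfl | he
    · exact haE
    · rw [Finset.mem_singleton.mp he]; exact hbE
  have hEsplit : E' ∪ ({(u, v), (v, u)} : Finset (V × V)) = treeEdges T := by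
    rw [hE']; exact Finset.sdiff_union_of_subset hP2sub
  have hdisjP : Disjoint E' ({(u, v), (v, u)} : Finset (V × V)) := by
    rw [hE']; exact Finset.sdiff_disjoint
  have hsym : ∀ x y, (x, y) ∈ E' → (y, x) ∈ E' := fun x y h => E'_symm h
  set Eu : Finset (V × V) := E'.filter (fun e => e.1 ∈ comp E' u) with hEu
  set Ev : Finset (V × V) := E'.filter (fun e => e.1 ∈ comp E' v) with hEv
  have hEuEv : Eu ∪ Ev = E' := by
    rw [hEu, hEv]
    ext e
    simp only [Finset.mem_union, Finset.mem_filter]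
    constructor
    · rintro (⟨h, -⟩ | ⟨h, -⟩) <;> exact h
    · intro h
      rcases cover hT.isConnected u v e.1 with hc | hc
      · exact Or.inl ⟨h, hc⟩
      · exact Or.inr ⟨h, hc⟩
  have hdEuEv : Disjoint Eu Ev := by
    rw [Finset.disjoint_left]
    intro e he1 he2
    rw [hEu, Finset.mem_filter] at he1
    rw [hEv, Finset.mem_filter] at he2
    exact Finset.disjoint_left.mp (comp_disjoint hT hv) he1.2 he2.2
  -- localization
  have hlocu : ∀ L, L ⊆ E' → (Reaches L S u ↔ Reaches (L ∩ Eu) S u) := by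
    intro L hL
    have h := reaches_localize hsym hL S u
    rwa [← hEu] at h
  have hlocv : ∀ L, L ⊆ E' → (Reaches L S v ↔ Reaches (L ∩ Ev) S v) := by
    intro L hL
    have h := reaches_localize hsym hL S v
    rwa [← hEv] at h
  -- Step A : ap E' u = ap Eu u
  have stepA : ap E' q S u = ap Eu q S u :=
    calc ap E' q S u
        = ∑ L ∈ E'.powerset, edgeWeight E' q L *
            (if Reaches (L ∩ Eu) S u then (1:ℝ) else 0) :=
          Finset.sum_congr rfl fun L hL => by
            rw [if_congr (hlocu L (Finset.mem_powerset.mp hL)) rfl rfl]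
      _ = ∑ L ∈ (Eu ∪ Ev).powerset, edgeWeight (Eu ∪ Ev) q L *
            (if Reaches (L ∩ Eu) S u then (1:ℝ) else 0) := by rw [hEuEv]
      _ = ap Eu q S u :=
          eval_left Eu Ev hdEuEv q (fun X => if Reaches X S u then (1:ℝ) else 0)
  -- Step B : ap E' v = ap Ev v
  have stepB : ap E' q S v = ap Ev q S v :=
    calc ap E' q S v
        = ∑ L ∈ E'.powerset, edgeWeight E' q L *
            (if Reaches (L ∩ Ev) S v then (1:ℝ) else 0) :=
          Finset.sum_congr rfl fun L hL => by
            rw [if_congr (hlocv L (Finset.mem_powerset.mp hL)) rfl rfl]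
      _ = ∑ L ∈ (Eu ∪ Ev).powerset, edgeWeight (Eu ∪ Ev) q L *
            (if Reaches (L ∩ Ev) S v then (1:ℝ) else 0) := by rw [hEuEv]
      _ = ap Ev q S v :=
          eval_right Eu Ev hdEuEv q (fun Y => if Reaches Y S v then (1:ℝ) else 0)
  -- fold helpers
  have hfoldu : ∑ X ∈ Eu.powerset, edgeWeight Eu q X *
      (if Reaches X S u then (1:ℝ) else 0) = ap Eu q S u := rfl
  -- the coefficient sum
  have hcoef : ∑ X ∈ Eu.powerset, edgeWeight Eu q X *
      ((1 - (if Reaches X S u then (1:ℝ) else 0)) * q (v, u))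
        = (1 - ap Eu q S u) * q (v, u) := by
    have h1 : ∀ X ∈ Eu.powerset, edgeWeight Eu q X *
        ((1 - (if Reaches X S u then (1:ℝ) else 0)) * q (v, u))
          = edgeWeight Eu q X * q (v, u) -
              edgeWeight Eu q X * (if Reaches X S u then (1:ℝ) else 0) * q (v, u) :=
      fun X _ => by ring
    rw [Finset.sum_congr rfl h1, Finset.sum_sub_distrib, ← Finset.sum_mul, ← Finset.sum_mul,
      sum_edgeWeight, hfoldu]
    ring
  -- Step C
  have stepC : ap (treeEdges T) q S u
      = ap Eu q S u + ((1 - ap Eu q S u) * q (v, u)) * ap Ev q S v :=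
    calc ap (treeEdges T) q S u
        = ∑ L ∈ (E' ∪ ({(u, v), (v, u)} : Finset (V × V))).powerset,
            edgeWeight (E' ∪ ({(u, v), (v, u)} : Finset (V × V))) q L *
              (if Reaches L S u then (1:ℝ) else 0) := by rw [hEsplit]; rfl
      _ = ∑ L ∈ (E' ∪ ({(u, v), (v, u)} : Finset (V × V))).powerset,
            edgeWeight (E' ∪ ({(u, v), (v, u)} : Finset (V × V))) q L *
              (if (Reaches (L ∩ E') S u ∨
                    ((v, u) ∈ L ∩ ({(u, v), (v, u)} : Finset (V × V)) ∧
                      Reaches (L ∩ E') S v)) then (1:ℝ) else 0) := by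
          refine Finset.sum_congr rfl fun L hL => ?_
          have hLsub : L ⊆ treeEdges T := hEsplit ▸ Finset.mem_powerset.mp hL
          have hsd : L \ ({(u, v), (v, u)} : Finset (V × V)) = L ∩ E' := by
            rw [hE']
            ext e
            simp only [Finset.mem_sdiff, Finset.mem_inter]
            exact ⟨fun ⟨h1, h2⟩ => ⟨h1, hLsub h1, h2⟩, fun ⟨h1, _, h3⟩ => ⟨h1, h3⟩⟩
          have hb : ((v, u) ∈ L ∩ ({(u, v), (v, u)} : Finset (V × V))) ↔ (v, u) ∈ L := by
            simp
          have hiff := reaches_split (L := L) (S := S) (u := u) (v := v)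
          rw [hsd] at hiff
          rw [if_congr (hiff.trans (or_congr Iff.rfl (and_congr hb.symm Iff.rfl))) rfl rfl]
      _ = ∑ L1 ∈ E'.powerset, ∑ L2 ∈ ({(u, v), (v, u)} : Finset (V × V)).powerset,
            edgeWeight E' q L1 * edgeWeight ({(u, v), (v, u)} : Finset (V × V)) q L2 *
              (if (Reaches L1 S u ∨ ((v, u) ∈ L2 ∧ Reaches L1 S v)) then (1:ℝ) else 0) :=
          split_sum E' ({(u, v), (v, u)} : Finset (V × V)) hdisjP q
            (fun X Y => if (Reaches X S u ∨ ((v, u) ∈ Y ∧ Reaches X S v)) then (1:ℝ) else 0)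
      _ = ∑ L1 ∈ E'.powerset, edgeWeight E' q L1 *
            (if Reaches L1 S u then (1:ℝ) else if Reaches L1 S v then q (v, u) else 0) := by
          refine Finset.sum_congr rfl fun L1 _ => ?_
          calc ∑ L2 ∈ ({(u, v), (v, u)} : Finset (V × V)).powerset,
                edgeWeight E' q L1 * edgeWeight ({(u, v), (v, u)} : Finset (V × V)) q L2 *
                  (if (Reaches L1 S u ∨ ((v, u) ∈ L2 ∧ Reaches L1 S v)) then (1:ℝ) else 0)
              = ∑ L2 ∈ ({(u, v), (v, u)} : Finset (V × V)).powerset,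
                  edgeWeight E' q L1 *
                    (edgeWeight ({(u, v), (v, u)} : Finset (V × V)) q L2 *
                      (if (Reaches L1 S u ∨ ((v, u) ∈ L2 ∧ Reaches L1 S v)) then (1:ℝ) else 0)) :=
                Finset.sum_congr rfl fun L2 _ => mul_assoc _ _ _
            _ = edgeWeight E' q L1 *
                  ∑ L2 ∈ ({(u, v), (v, u)} : Finset (V × V)).powerset,
                    edgeWeight ({(u, v), (v, u)} : Finset (V × V)) q L2 *
                      (if (Reaches L1 S u ∨ ((v, u) ∈ L2 ∧ Reaches L1 S v)) then (1:ℝ) else 0) :=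
                (Finset.mul_sum _ _ _).symm
            _ = edgeWeight E' q L1 *
                  (if Reaches L1 S u then (1:ℝ) else if Reaches L1 S v then q (v, u) else 0) := by
                rw [inner_eval hab q (Reaches L1 S u) (Reaches L1 S v)]
      _ = ∑ L1 ∈ E'.powerset, edgeWeight E' q L1 *
            ((if Reaches (L1 ∩ Eu) S u then (1:ℝ) else 0)
              + (1 - (if Reaches (L1 ∩ Eu) S u then (1:ℝ) else 0)) * q (v, u)
                * (if Reaches (L1 ∩ Ev) S v then (1:ℝ) else 0)) := by
          refine Finset.sum_congr rfl fun L1 hL1 => ?_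
          congr 1
          rw [if_congr (hlocu L1 (Finset.mem_powerset.mp hL1)) rfl
              (if_congr (hlocv L1 (Finset.mem_powerset.mp hL1)) rfl rfl)]
          exact ite_identity (q (v, u)) _ _
      _ = ∑ L1 ∈ E'.powerset,
            (edgeWeight E' q L1 * (if Reaches (L1 ∩ Eu) S u then (1:ℝ) else 0)
              + edgeWeight E' q L1 *
                  (((1 - (if Reaches (L1 ∩ Eu) S u then (1:ℝ) else 0)) * q (v, u))
                    * (if Reaches (L1 ∩ Ev) S v then (1:ℝ) else 0))) :=
          Finset.sum_congr rfl fun L1 _ => by ring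
      _ = (∑ L1 ∈ E'.powerset,
              edgeWeight E' q L1 * (if Reaches (L1 ∩ Eu) S u then (1:ℝ) else 0))
            + ∑ L1 ∈ E'.powerset, edgeWeight E' q L1 *
                (((1 - (if Reaches (L1 ∩ Eu) S u then (1:ℝ) else 0)) * q (v, u))
                  * (if Reaches (L1 ∩ Ev) S v then (1:ℝ) else 0)) :=
          Finset.sum_add_distrib
      _ = (∑ L1 ∈ (Eu ∪ Ev).powerset,
              edgeWeight (Eu ∪ Ev) q L1 * (if Reaches (L1 ∩ Eu) S u then (1:ℝ) else 0))
            + ∑ L1 ∈ (Eu ∪ Ev).powerset, edgeWeight (Eu ∪ Ev) q L1 *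
                (((1 - (if Reaches (L1 ∩ Eu) S u then (1:ℝ) else 0)) * q (v, u))
                  * (if Reaches (L1 ∩ Ev) S v then (1:ℝ) else 0)) := by rw [hEuEv]
      _ = ap Eu q S u + ((1 - ap Eu q S u) * q (v, u)) * ap Ev q S v := by
          rw [eval_left Eu Ev hdEuEv q (fun X => if Reaches X S u then (1:ℝ) else 0),
            eval_both Eu Ev hdEuEv q
              (fun X => (1 - (if Reaches X S u then (1:ℝ) else 0)) * q (v, u))
              (fun Y => if Reaches Y S v then (1:ℝ) else 0),
            hcoef]
          rfl
  rw [stepA, stepB, stepC]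

lemma final_alg {x y c a : ℝ} (h : a = x + (1 - x) * c * y)
    (hx1 : x ≤ 1) (hy0 : 0 ≤ y) (hy1 : y ≤ 1) (hc0 : 0 ≤ c) (hc1 : c ≤ 1)
    (hlt : a < 1) :
    0 < 1 - y * c ∧ x = 1 - (1 - a) / (1 - y * c) := by
  have he : (1 - x) * (1 - y * c) = 1 - a := by rw [h]; ring
  have hprod : 0 < (1 - x) * (1 - y * c) := by rw [he]; linarith
  have hfac : 0 < 1 - y * c := by nlinarith
  refine ⟨hfac, ?_⟩
  rw [h, eq_sub_iff_add_eq, ← eq_sub_iff_add_eq', div_eq_iff hfac.ne']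
  ring

end IB

end IBAux

/-- On a bidirected tree where every non-seed node is activated with probability
strictly less than one, for every non-seed node `u` and neighbor `v`:
`1 − ap_B(v\u)·p^B_{vu} > 0` and
`ap_B(u\v) = 1 − (1 − ap_B(u)) / (1 − ap_B(v\u)·p^B_{vu})`. -/
theorem apSub_eq_div [Fintype V] [DecidableEq V]
    (T : SimpleGraph V) [DecidableRel T.Adj] (hT : T.IsTree)
    (p p' : V × V → ℝ)
    (hp0 : ∀ e, 0 ≤ p e) (hpp' : ∀ e, p e ≤ p' e) (hp'1 : ∀ e, p' e ≤ 1)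
    (S B : Finset V)
    (hlt : ∀ w, w ∉ S → ap (treeEdges T) (pB p p' B) S w < 1)
    (u : V) (hu : u ∉ S) (v : V) (hv : T.Adj u v) :
    0 < 1 - apSub (treeEdges T) (pB p p' B) S v u * pB p p' B (v, u) ∧
    apSub (treeEdges T) (pB p p' B) S u v =
      1 - (1 - ap (treeEdges T) (pB p p' B) S u) /
        (1 - apSub (treeEdges T) (pB p p' B) S v u * pB p p' B (v, u)) := by
  have hq0 : ∀ e, 0 ≤ pB p p' B e := by
    intro e
    unfold pB
    split
    · exact (hp0 e).trans (hpp' e)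
    · exact hp0 e
  have hq1 : ∀ e, pB p p' B e ≤ 1 := by
    intro e
    unfold pB
    split
    · exact hp'1 e
    · exact (hpp' e).trans (hp'1 e)
  have hkey := IB.key hT (pB p p' B) S hv
  have hAu : apSub (treeEdges T) (pB p p' B) S u v
      = ap (treeEdges T \ ({(u, v), (v, u)} : Finset (V × V))) (pB p p' B) S u := by
    unfold apSub
    rw [Finset.pair_comm (v, u) (u, v)]
  have hAv : apSub (treeEdges T) (pB p p' B) S v u
      = ap (treeEdges T \ ({(u, v), (v, u)} : Finset (V × V))) (pB p p' B) S v := rfl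
  rw [hAu, hAv]
  exact IB.final_alg hkey
    (IB.ap_le_one hq0 hq1 S u)
    (IB.ap_nonneg hq0 hq1 S v)
    (IB.ap_le_one hq0 hq1 S v)
    (hq0 (v, u)) (hq1 (v, u))
    (hlt u hu)

end
end

section
/- Let G be a bidirected tree with seed set S and boost set B, and assume that every non-seed node is activated with probability strictly less than one (ap_B(w) < 1 for all w ∉ S). Then for every non-seed node u and every two distinct neighbors v, w of u, one has ∏_{x ∈ N(u) \ {v, w}} (1 − ap_B(x\u) · p^B_{xu}) = (1 − ap_B(u\v)) / (1 − ap_B(w\u) · p^B_{wu}). -/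
open Finset
open scoped Classical

noncomputable section

variable {V : Type*}

/-! ### Auxiliary development -/

section AuxProb

variable [Fintype V] [DecidableEq V]

lemma ind_congr {P Q : Prop} [Decidable P] [Decidable Q] (h : P ↔ Q) :
    (if P then (1 : ℝ) else 0) = if Q then 1 else 0 := by
  by_cases hp : P
  · rw [if_pos hp, if_pos (h.mp hp)]
  · rw [if_neg hp, if_neg fun hq => hp (h.mpr hq)]

lemma ind_and (P Q : Prop) [Decidable P] [Decidable Q] [Decidable (P ∧ Q)] :
    (if P ∧ Q then (1 : ℝ) else 0) =
      (if P then (1 : ℝ) else 0) * (if Q then (1 : ℝ) else 0) := by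
  by_cases hp : P <;> by_cases hq : Q <;> simp [hp, hq]

lemma sum_edgeWeight (E : Finset (V × V)) (q : V × V → ℝ) :
    ∑ L ∈ E.powerset, edgeWeight E q L = 1 := by
  unfold edgeWeight
  rw [← Finset.prod_add]
  simp

lemma edgeWeight_nonneg (E : Finset (V × V)) (q : V × V → ℝ)
    (hq0 : ∀ e, 0 ≤ q e) (hq1 : ∀ e, q e ≤ 1) (L : Finset (V × V)) :
    0 ≤ edgeWeight E q L :=
  mul_nonneg (Finset.prod_nonneg fun e _ => hq0 e)
    (Finset.prod_nonneg fun e _ => by linarith [hq1 e])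

lemma edgeWeight_union (E₁ E₂ L₁ L₂ : Finset (V × V)) (q : V × V → ℝ)
    (hd : Disjoint E₁ E₂) (h₁ : L₁ ⊆ E₁) (h₂ : L₂ ⊆ E₂) :
    edgeWeight (E₁ ∪ E₂) q (L₁ ∪ L₂) = edgeWeight E₁ q L₁ * edgeWeight E₂ q L₂ := by
  have hdL : Disjoint L₁ L₂ := hd.mono h₁ h₂
  have hsd : (E₁ ∪ E₂) \ (L₁ ∪ L₂) = (E₁ \ L₁) ∪ (E₂ \ L₂) := by
    ext e
    simp only [Finset.mem_sdiff, Finset.mem_union]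
    constructor
    · rintro ⟨h | h, hn⟩
      · exact Or.inl ⟨h, fun hm => hn (Or.inl hm)⟩
      · exact Or.inr ⟨h, fun hm => hn (Or.inr hm)⟩
    · rintro (⟨h, hn⟩ | ⟨h, hn⟩)
      · exact ⟨Or.inl h, fun hm =>
          hm.elim hn fun hm2 => (Finset.disjoint_left.mp hd h) (h₂ hm2)⟩
      · exact ⟨Or.inr h, fun hm =>
          hm.elim (fun hm1 => (Finset.disjoint_right.mp hd h) (h₁ hm1)) hn⟩
  unfold edgeWeight
  rw [Finset.prod_union hdL, hsd,
    Finset.prod_union (hd.mono Finset.sdiff_subset Finset.sdiff_subset)]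
  ring

lemma sum_powerset_union {M : Type*} [AddCommMonoid M] (E₁ E₂ : Finset (V × V))
    (hd : Disjoint E₁ E₂) (F : Finset (V × V) → M) :
    ∑ L ∈ (E₁ ∪ E₂).powerset, F L
      = ∑ L₁ ∈ E₁.powerset, ∑ L₂ ∈ E₂.powerset, F (L₁ ∪ L₂) := by
  rw [← Finset.sum_product (f := fun P : Finset (V × V) × Finset (V × V) => F (P.1 ∪ P.2))]
  refine Finset.sum_nbij' (fun L => (L ∩ E₁, L ∩ E₂)) (fun P => P.1 ∪ P.2) ?_ ?_ ?_ ?_ ?_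
  · intro L hL
    rw [Finset.mem_powerset] at hL
    exact Finset.mem_product.mpr ⟨Finset.mem_powerset.mpr Finset.inter_subset_right,
      Finset.mem_powerset.mpr Finset.inter_subset_right⟩
  · intro P hP
    rw [Finset.mem_product] at hP
    exact Finset.mem_powerset.mpr
      (Finset.union_subset
        ((Finset.mem_powerset.mp hP.1).trans Finset.subset_union_left)
        ((Finset.mem_powerset.mp hP.2).trans Finset.subset_union_right))
  · intro L hL
    rw [Finset.mem_powerset] at hL
    dsimp only
    rw [← Finset.inter_union_distrib_left]
    exact Finset.inter_eq_left.mpr hL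
  · intro P hP
    rw [Finset.mem_product] at hP
    have h1 := Finset.mem_powerset.mp hP.1
    have h2 := Finset.mem_powerset.mp hP.2
    have e1 : (P.1 ∪ P.2) ∩ E₁ = P.1 := by
      ext e
      simp only [Finset.mem_inter, Finset.mem_union]
      constructor
      · rintro ⟨h | h, he⟩
        · exact h
        · exact absurd he (Finset.disjoint_right.mp hd (h2 h))
      · intro h; exact ⟨Or.inl h, h1 h⟩
    have e2 : (P.1 ∪ P.2) ∩ E₂ = P.2 := by
      ext e
      simp only [Finset.mem_inter, Finset.mem_union]
      constructor
      · rintro ⟨h | h, he⟩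
        · exact absurd he (Finset.disjoint_left.mp hd (h1 h))
        · exact h
      · intro h; exact ⟨Or.inr h, h2 h⟩
    exact Prod.ext e1 e2
  · intro L hL
    rw [Finset.mem_powerset] at hL
    dsimp only
    rw [← Finset.inter_union_distrib_left, Finset.inter_eq_left.mpr hL]

lemma sum_mul_split (E₁ E₂ : Finset (V × V)) (hd : Disjoint E₁ E₂) (q : V × V → ℝ)
    (f g : Finset (V × V) → ℝ)
    (hf : ∀ L, L ⊆ E₁ ∪ E₂ → f L = f (L ∩ E₁))
    (hg : ∀ L, L ⊆ E₁ ∪ E₂ → g L = g (L ∩ E₂)) :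
    ∑ L ∈ (E₁ ∪ E₂).powerset, edgeWeight (E₁ ∪ E₂) q L * (f L * g L)
      = (∑ L ∈ E₁.powerset, edgeWeight E₁ q L * f L) *
        (∑ L ∈ E₂.powerset, edgeWeight E₂ q L * g L) := by
  rw [Finset.sum_mul_sum,
    sum_powerset_union E₁ E₂ hd (fun L => edgeWeight (E₁ ∪ E₂) q L * (f L * g L))]
  refine Finset.sum_congr rfl fun L₁ h₁ => Finset.sum_congr rfl fun L₂ h₂ => ?_
  rw [Finset.mem_powerset] at h₁ h₂
  have hL : L₁ ∪ L₂ ⊆ E₁ ∪ E₂ :=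
    Finset.union_subset (h₁.trans Finset.subset_union_left)
      (h₂.trans Finset.subset_union_right)
  have e1 : (L₁ ∪ L₂) ∩ E₁ = L₁ := by
    ext e
    simp only [Finset.mem_inter, Finset.mem_union]
    constructor
    · rintro ⟨h | h, he⟩
      · exact h
      · exact absurd he (Finset.disjoint_right.mp hd (h₂ h))
    · intro h; exact ⟨Or.inl h, h₁ h⟩
  have e2 : (L₁ ∪ L₂) ∩ E₂ = L₂ := by
    ext e
    simp only [Finset.mem_inter, Finset.mem_union]
    constructor
    · rintro ⟨h | h, he⟩
      · exact absurd he (Finset.disjoint_left.mp hd (h₁ h))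
      · exact h
    · intro h; exact ⟨Or.inr h, h₂ h⟩
  rw [edgeWeight_union E₁ E₂ L₁ L₂ q hd h₁ h₂, hf _ hL, hg _ hL, e1, e2]
  ring

lemma sum_mul_restrict (E₀ E : Finset (V × V)) (hsub : E₀ ⊆ E) (q : V × V → ℝ)
    (f : Finset (V × V) → ℝ) (hf : ∀ L, L ⊆ E → f L = f (L ∩ E₀)) :
    ∑ L ∈ E.powerset, edgeWeight E q L * f L
      = ∑ L ∈ E₀.powerset, edgeWeight E₀ q L * f L := by
  have hE : E = E₀ ∪ (E \ E₀) := (Finset.union_sdiff_of_subset hsub).symm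
  have hd : Disjoint E₀ (E \ E₀) := Finset.disjoint_sdiff
  have key := sum_mul_split E₀ (E \ E₀) hd q f (fun _ => 1)
    (by rw [← hE]; exact hf) (fun _ _ => rfl)
  simp only [mul_one] at key
  rw [← hE, sum_edgeWeight, mul_one] at key
  exact key

lemma sum_mul_prod_family {ι : Type*} [DecidableEq ι] (D : ι → Finset (V × V))
    (q : V × V → ℝ) (h : ι → Finset (V × V) → ℝ) :
    ∀ s : Finset ι, (∀ i ∈ s, ∀ j ∈ s, i ≠ j → Disjoint (D i) (D j)) →
      (∀ i ∈ s, ∀ L, h i L = h i (L ∩ D i)) →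
      ∑ L ∈ (s.biUnion D).powerset, edgeWeight (s.biUnion D) q L * ∏ i ∈ s, h i L
        = ∏ i ∈ s, ∑ L ∈ (D i).powerset, edgeWeight (D i) q L * h i L := by
  intro s
  induction s using Finset.induction_on with
  | empty => intro _ _; simp [edgeWeight]
  | @insert a s ha ih =>
    intro hD hdep
    have hd : Disjoint (D a) (s.biUnion D) := by
      rw [Finset.disjoint_biUnion_right]
      intro i hi
      exact hD a (Finset.mem_insert_self a s) i (Finset.mem_insert_of_mem hi)
        (fun he => ha (he ▸ hi))
    have hkey := sum_mul_split (D a) (s.biUnion D) hd q (h a)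
      (fun L => ∏ i ∈ s, h i L)
      (fun L _ => hdep a (Finset.mem_insert_self a s) L)
      (fun L _ => by
        refine Finset.prod_congr rfl fun i hi => ?_
        have hsub : D i ⊆ s.biUnion D := Finset.subset_biUnion_of_mem D hi
        rw [hdep i (Finset.mem_insert_of_mem hi) L,
          hdep i (Finset.mem_insert_of_mem hi) (L ∩ s.biUnion D),
          Finset.inter_assoc, Finset.inter_eq_right.mpr hsub])
    have hbu : (insert a s).biUnion D = D a ∪ s.biUnion D := Finset.biUnion_insert
    calc
      ∑ L ∈ ((insert a s).biUnion D).powerset,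
          edgeWeight ((insert a s).biUnion D) q L * ∏ i ∈ insert a s, h i L
        = ∑ L ∈ (D a ∪ s.biUnion D).powerset,
            edgeWeight (D a ∪ s.biUnion D) q L * (h a L * ∏ i ∈ s, h i L) := by
          rw [hbu]
          exact Finset.sum_congr rfl fun L _ => by rw [Finset.prod_insert ha]
      _ = (∑ L ∈ (D a).powerset, edgeWeight (D a) q L * h a L) *
            (∑ L ∈ (s.biUnion D).powerset, edgeWeight (s.biUnion D) q L * ∏ i ∈ s, h i L) :=
          hkey
      _ = ∏ i ∈ insert a s, ∑ L ∈ (D i).powerset, edgeWeight (D i) q L * h i L := by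
          rw [ih (fun i hi j hj => hD i (Finset.mem_insert_of_mem hi) j
              (Finset.mem_insert_of_mem hj))
            (fun i hi => hdep i (Finset.mem_insert_of_mem hi)),
            Finset.prod_insert ha]

end AuxProb

section AuxTree

variable [Fintype V] [DecidableEq V] (T : SimpleGraph V) [DecidableRel T.Adj]

lemma mem_treeEdges {a b : V} : (a, b) ∈ treeEdges T ↔ T.Adj a b := by
  simp [treeEdges]

lemma rtg_mono {L₁ L₂ : Finset (V × V)} (h : L₁ ⊆ L₂) {s t : V}
    (hr : Relation.ReflTransGen (fun a b => (a, b) ∈ L₁) s t) :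
    Relation.ReflTransGen (fun a b => (a, b) ∈ L₂) s t :=
  Relation.ReflTransGen.mono (by intro a b hab; exact h hab) s t hr

lemma mem_comp' {F : Finset (V × V)} {a z : V} :
    z ∈ comp F a ↔ Relation.ReflTransGen (fun x y => (x, y) ∈ F) a z := by
  simp [comp]

lemma rtg_symm {r : V → V → Prop} (hs : ∀ x y, r x y → r y x) {s t : V}
    (h : Relation.ReflTransGen r s t) : Relation.ReflTransGen r t s := by
  induction h with
  | refl => exact .refl
  | tail _ hct ih => exact Relation.ReflTransGen.head (hs _ _ hct) ih

/-- The edge set of the tree with the two directed edges between `a` and `b` removed. -/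
def cutE (a b : V) : Finset (V × V) :=
  treeEdges T \ {(a, b), (b, a)}

lemma cutE_comm (a b : V) : cutE T a b = cutE T b a := by
  unfold cutE
  rw [Finset.pair_comm]

lemma cutE_subset (a b : V) : cutE T a b ⊆ treeEdges T := Finset.sdiff_subset

lemma cutE_symm {a b c d : V} : (c, d) ∈ cutE T a b ↔ (d, c) ∈ cutE T a b := by
  simp only [cutE, Finset.mem_sdiff, Finset.mem_insert, Finset.mem_singleton,
    mem_treeEdges, Prod.mk.injEq]
  constructor <;> rintro ⟨hadj, hne⟩ <;> exact ⟨hadj.symm, by tauto⟩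

lemma rtg_walk {L : Finset (V × V)} (hL : L ⊆ treeEdges T) {s t : V}
    (h : Relation.ReflTransGen (fun a b => (a, b) ∈ L) s t) :
    ∃ w : T.Walk s t, ∀ e ∈ w.edges, ∃ x y, (x, y) ∈ L ∧ e = s(x, y) := by
  induction h with
  | refl => exact ⟨.nil, by simp⟩
  | @tail c t' _ hct ih =>
    obtain ⟨w, hw⟩ := ih
    refine ⟨w.concat ((mem_treeEdges T).mp (hL hct)), ?_⟩
    intro e he
    rw [SimpleGraph.Walk.edges_concat] at he
    have he' : e ∈ w.edges ∨ e = s(c, t') := by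
      simpa [List.concat_eq_append] using he
    rcases he' with h1 | h1
    · exact hw e h1
    · exact ⟨c, t', hct, h1⟩

lemma not_mem_comp_cutE (hT : T.IsTree) {a b : V} (hab : T.Adj a b) :
    b ∉ comp (cutE T a b) a := by
  intro hb
  obtain ⟨w, hw⟩ := rtg_walk T (cutE_subset T a b) (mem_comp'.mp hb)
  have hne : s(a, b) ∉ w.edges := by
    intro hmem
    obtain ⟨x, y, hxy, he⟩ := hw _ hmem
    have hnp := (Finset.mem_sdiff.mp hxy).2
    rw [Sym2.eq_iff] at he
    simp only [Finset.mem_insert, Finset.mem_singleton, Prod.mk.injEq, not_or] at hnp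
    rcases he with ⟨h1, h2⟩ | ⟨h1, h2⟩
    · exact hnp.1 ⟨h1.symm, h2.symm⟩
    · exact hnp.2 ⟨h2.symm, h1.symm⟩
  have huniq := (SimpleGraph.isAcyclic_iff_path_unique.mp hT.IsAcyclic)
    w.toPath (SimpleGraph.Path.singleton hab)
  have hmem : s(a, b) ∈ (w.toPath : T.Walk a b).edges := by
    rw [huniq]
    simp [SimpleGraph.Path.singleton]
  exact hne (SimpleGraph.Walk.edges_toPath_subset w hmem)

lemma comp_cutE_cover (hT : T.IsTree) {a b : V} (hab : T.Adj a b) (z : V) :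
    z ∈ comp (cutE T a b) a ∨ z ∈ comp (cutE T a b) b := by
  suffices H : ∀ (y z : V), T.Walk y z →
      (y ∈ comp (cutE T a b) a ∨ y ∈ comp (cutE T a b) b) →
      (z ∈ comp (cutE T a b) a ∨ z ∈ comp (cutE T a b) b) by
    obtain ⟨w⟩ := hT.isConnected.preconnected a z
    exact H a z w (Or.inl (mem_comp'.mpr .refl))
  intro y z w
  induction w with
  | nil => exact id
  | @cons y' c z' hadj p ih =>
    intro hy
    apply ih
    by_cases hs : s(y', c) = s(a, b)
    · rw [Sym2.eq_iff] at hs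
      rcases hs with ⟨h1, h2⟩ | ⟨h1, h2⟩
      · exact Or.inr (mem_comp'.mpr (h2 ▸ Relation.ReflTransGen.refl))
      · exact Or.inl (mem_comp'.mpr (h2 ▸ Relation.ReflTransGen.refl))
    · have he : (y', c) ∈ cutE T a b := by
        refine Finset.mem_sdiff.mpr ⟨(mem_treeEdges T).mpr hadj, fun hm => ?_⟩
        simp only [Finset.mem_insert, Finset.mem_singleton, Prod.mk.injEq] at hm
        rcases hm with ⟨rfl, rfl⟩ | ⟨rfl, rfl⟩
        · exact hs rfl
        · exact hs Sym2.eq_swap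
      rcases hy with hy | hy
      · exact Or.inl (mem_comp'.mpr ((mem_comp'.mp hy).tail he))
      · exact Or.inr (mem_comp'.mpr ((mem_comp'.mp hy).tail he))

lemma comp_cutE_disjoint (hT : T.IsTree) {a b : V} (hab : T.Adj a b) {z : V}
    (hza : z ∈ comp (cutE T a b) a) : z ∉ comp (cutE T a b) b := by
  intro hzb
  apply not_mem_comp_cutE T hT hab
  have h1 := mem_comp'.mp hza
  have h2 := rtg_symm (fun x y h => (cutE_symm T).mp h) (mem_comp'.mp hzb)
  exact mem_comp'.mpr (h1.trans h2)

lemma not_mem_comp_cutE_iff (hT : T.IsTree) {a b : V} (hab : T.Adj a b) {z : V} :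
    z ∉ comp (cutE T a b) a ↔ z ∈ comp (cutE T a b) b :=
  ⟨fun h => (comp_cutE_cover T hT hab z).resolve_left h,
   fun h2 h1 => comp_cutE_disjoint T hT hab h1 h2⟩

lemma cross_edge (hT : T.IsTree) {a b : V} (hab : T.Adj a b) {c t : V}
    (he : (c, t) ∈ treeEdges T)
    (hc : c ∈ comp (cutE T a b) a) (ht : t ∉ comp (cutE T a b) a) :
    c = a ∧ t = b := by
  by_cases h : (c, t) ∈ cutE T a b
  · exact absurd (mem_comp'.mpr ((mem_comp'.mp hc).tail h)) ht
  · have hpair : (c, t) ∈ ({(a, b), (b, a)} : Finset (V × V)) := by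
      by_contra hnp
      exact h (Finset.mem_sdiff.mpr ⟨he, hnp⟩)
    simp only [Finset.mem_insert, Finset.mem_singleton, Prod.mk.injEq] at hpair
    rcases hpair with ⟨rfl, rfl⟩ | ⟨rfl, rfl⟩
    · exact ⟨rfl, rfl⟩
    · exact absurd hc (not_mem_comp_cutE T hT hab)

lemma cross_edge' (hT : T.IsTree) {a b : V} (hab : T.Adj a b) {c t : V}
    (he : (c, t) ∈ treeEdges T)
    (hc : c ∉ comp (cutE T a b) a) (ht : t ∈ comp (cutE T a b) a) :
    c = b ∧ t = a := by
  have he' : (t, c) ∈ treeEdges T := (mem_treeEdges T).mpr ((mem_treeEdges T).mp he).symm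
  have := cross_edge T hT hab he' ht hc
  exact ⟨this.2, this.1⟩

lemma rtg_confine {a b : V} {L : Finset (V × V)} (hL : L ⊆ cutE T a b) {s t : V}
    (h : Relation.ReflTransGen (fun x y => (x, y) ∈ L) s t) :
    t ∈ comp (cutE T a b) a →
      Relation.ReflTransGen
        (fun x y => (x, y) ∈ L.filter fun e =>
          e.1 ∈ comp (cutE T a b) a ∧ e.2 ∈ comp (cutE T a b) a) s t := by
  induction h with
  | refl => exact fun _ => .refl
  | @tail c t' hsc hct ih =>
    intro ht'
    have hc : c ∈ comp (cutE T a b) a :=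
      mem_comp'.mpr ((mem_comp'.mp ht').tail ((cutE_symm T).mp (hL hct)))
    exact (ih hc).tail (Finset.mem_filter.mpr ⟨hct, hc, ht'⟩)

lemma rtg_cross_cut (hT : T.IsTree) {a b : V} (hab : T.Adj a b) {L : Finset (V × V)}
    (hL : L ⊆ treeEdges T) {s t : V}
    (hs : s ∈ comp (cutE T a b) a)
    (h : Relation.ReflTransGen (fun x y => (x, y) ∈ L) s t) :
    (t ∈ comp (cutE T a b) a →
        Relation.ReflTransGen (fun x y => (x, y) ∈ L \ {(a, b), (b, a)}) s t) ∧
      (t ∉ comp (cutE T a b) a →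
        Relation.ReflTransGen (fun x y => (x, y) ∈ L \ {(a, b), (b, a)}) s a ∧
          (a, b) ∈ L) := by
  induction h with
  | refl => exact ⟨fun _ => .refl, fun hs' => absurd hs hs'⟩
  | @tail c t' hsc hct ih =>
    by_cases hcA : c ∈ comp (cutE T a b) a
    · by_cases htA : t' ∈ comp (cutE T a b) a
      · refine ⟨fun _ => (ih.1 hcA).tail ?_, fun h' => absurd htA h'⟩
        have hb := not_mem_comp_cutE T hT hab
        refine Finset.mem_sdiff.mpr ⟨hct, fun hm => ?_⟩
        simp only [Finset.mem_insert, Finset.mem_singleton, Prod.mk.injEq] at hm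
        rcases hm with ⟨rfl, rfl⟩ | ⟨rfl, rfl⟩
        · exact hb htA
        · exact hb hcA
      · obtain ⟨rfl, rfl⟩ := cross_edge T hT hab (hL hct) hcA htA
        exact ⟨fun h' => absurd h' htA, fun _ => ⟨ih.1 hcA, hct⟩⟩
    · by_cases htA : t' ∈ comp (cutE T a b) a
      · obtain ⟨rfl, rfl⟩ := cross_edge' T hT hab (hL hct) hcA htA
        exact ⟨fun _ => (ih.2 hcA).1, fun h' => absurd htA h'⟩
      · exact ⟨fun h' => absurd h' htA, fun _ => ih.2 hcA⟩

lemma rtg_avoid {F : Finset (V × V)} {y u : V} (hu : u ∉ comp F y) {z : V}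
    (h : Relation.ReflTransGen (fun c d => (c, d) ∈ F) y z) :
    Relation.ReflTransGen
      (fun c d => (c, d) ∈ F.filter fun e => e.1 ≠ u ∧ e.2 ≠ u) y z := by
  induction h with
  | refl => exact .refl
  | @tail c z' hyc hcz ih =>
    have hcA : c ∈ comp F y := mem_comp'.mpr hyc
    have hzA : z' ∈ comp F y := mem_comp'.mpr (hyc.tail hcz)
    exact ih.tail (Finset.mem_filter.mpr
      ⟨hcz, fun hc => hu (hc ▸ hcA), fun hz => hu (hz ▸ hzA)⟩)

lemma last_step (hT : T.IsTree) :
    ∀ L : Finset (V × V), L ⊆ treeEdges T → ∀ s u : V, s ≠ u →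
      Relation.ReflTransGen (fun x y => (x, y) ∈ L) s u →
      ∃ x, (x, u) ∈ L ∧
        Relation.ReflTransGen (fun c d => (c, d) ∈ L \ {(u, x), (x, u)}) s x := by
  intro L
  induction L using Finset.strongInduction with
  | _ L ih =>
    intro hL s u hsu h
    rcases h.cases_tail with h' | ⟨c, hsc, hcu⟩
    · exact absurd h'.symm hsu
    · have hadj : T.Adj c u := (mem_treeEdges T).mp (hL hcu)
      by_cases hs : s ∈ comp (cutE T c u) c
      · refine ⟨c, hcu, ?_⟩
        have hres := (rtg_cross_cut T hT hadj hL hs hsc).1 (mem_comp'.mpr .refl)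
        rwa [Finset.pair_comm (c, u) (u, c)] at hres
      · have hs' : s ∈ comp (cutE T c u) u := (not_mem_comp_cutE_iff T hT hadj).mp hs
        have hs'' : s ∈ comp (cutE T u c) u := by rwa [cutE_comm T u c]
        have hcross := (rtg_cross_cut T hT hadj.symm hL hs'' h).1 (mem_comp'.mpr .refl)
        have hss : L \ ({(u, c), (c, u)} : Finset (V × V)) ⊂ L := by
          refine (Finset.ssubset_iff_of_subset Finset.sdiff_subset).mpr ⟨(c, u), hcu, ?_⟩
          simp
        obtain ⟨x, hx1, hx2⟩ := ih _ hss (Finset.sdiff_subset.trans hL) s u hsu hcross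
        exact ⟨x, Finset.sdiff_subset hx1,
          rtg_mono (Finset.sdiff_subset_sdiff Finset.sdiff_subset (le_refl _)) hx2⟩

/-- The vertex set of the subtree `G_{x\u}`. -/
def side (x u : V) : Finset V := comp (cutE T x u) x

/-- The edge set of the subtree `G_{x\u}`. -/
def sideE (x u : V) : Finset (V × V) :=
  (treeEdges T).filter fun e => e.1 ∈ side T x u ∧ e.2 ∈ side T x u

/-- The edges relevant to activation of `u` through neighbor `x`. -/
def Dx (x u : V) : Finset (V × V) := insert (x, u) (sideE T x u)

lemma u_not_mem_side (hT : T.IsTree) {x u : V} (hxu : T.Adj x u) : u ∉ side T x u :=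
  not_mem_comp_cutE T hT hxu

lemma x_mem_side (x u : V) : x ∈ side T x u := mem_comp'.mpr .refl

lemma sideE_subset_cutE (hT : T.IsTree) {x u : V} (hxu : T.Adj x u) : sideE T x u ⊆ cutE T x u := by
  intro e he
  have h1 := Finset.mem_filter.mp he
  refine Finset.mem_sdiff.mpr ⟨h1.1, fun hm => ?_⟩
  rcases Finset.mem_insert.mp hm with h2 | h2
  · subst h2
    exact u_not_mem_side T hT hxu h1.2.2
  · rw [Finset.mem_singleton] at h2
    subst h2
    exact u_not_mem_side T hT hxu h1.2.1

lemma xu_not_mem_sideE (hT : T.IsTree) {x u : V} (hxu : T.Adj x u) : (x, u) ∉ sideE T x u := by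
  intro h
  exact u_not_mem_side T hT hxu (Finset.mem_filter.mp h).2.2

lemma Dx_inter_sideE (x u : V) : Dx T x u ∩ sideE T x u = sideE T x u :=
  Finset.inter_eq_right.mpr (Finset.subset_insert _ _)

lemma reach_side (hT : T.IsTree) {x u : V} (hxu : T.Adj x u) {L : Finset (V × V)}
    (hL : L ⊆ cutE T x u) (S : Finset V) :
    Reaches L S x ↔ Reaches (L ∩ sideE T x u) S x := by
  constructor
  · rintro ⟨s, hs, hr⟩
    refine ⟨s, hs, rtg_mono ?_ (rtg_confine T hL hr (x_mem_side T x u))⟩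
    intro e he
    have h1 := Finset.mem_filter.mp he
    exact Finset.mem_inter.mpr ⟨h1.1,
      Finset.mem_filter.mpr ⟨cutE_subset T x u (hL h1.1), h1.2⟩⟩
  · rintro ⟨s, hs, hr⟩
    exact ⟨s, hs, rtg_mono Finset.inter_subset_left hr⟩

lemma apSub_eq_ap_sideE (hT : T.IsTree) (q : V × V → ℝ) (S : Finset V) {x u : V} (hxu : T.Adj x u) :
    apSub (treeEdges T) q S x u = ap (sideE T x u) q S x := by
  have hE : treeEdges T \ ({(u, x), (x, u)} : Finset (V × V)) = cutE T x u :=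
    cutE_comm T u x
  unfold apSub ap
  rw [hE]
  exact sum_mul_restrict (sideE T x u) (cutE T x u) (sideE_subset_cutE T hT hxu) q _
    fun L hL => ind_congr (reach_side T hT hxu hL S)

/-- The indicator of activation of `u` through neighbor `x`. -/
def chi (S : Finset V) (x u : V) (L : Finset (V × V)) : ℝ :=
  if (x, u) ∈ L ∧ Reaches (L ∩ sideE T x u) S x then 1 else 0

lemma chi_dep (S : Finset V) (x u : V) (L D : Finset (V × V))
    (hmem : (x, u) ∈ D) (hside : sideE T x u ⊆ D) :
    chi T S x u (L ∩ D) = chi T S x u L := by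
  unfold chi
  have h1 : (x, u) ∈ L ∩ D ↔ (x, u) ∈ L :=
    ⟨fun h => (Finset.mem_inter.mp h).1, fun h => Finset.mem_inter.mpr ⟨h, hmem⟩⟩
  have h2 : (L ∩ D) ∩ sideE T x u = L ∩ sideE T x u := by
    rw [Finset.inter_assoc, Finset.inter_eq_right.mpr hside]
  rw [h2]
  exact ind_congr (and_congr_left' h1)

lemma reach_step (S : Finset V) {x u : V} {L : Finset (V × V)}
    (hxuL : (x, u) ∈ L) (h : Reaches (L ∩ sideE T x u) S x) : Reaches L S u := by
  obtain ⟨s, hs, hr⟩ := h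
  exact ⟨s, hs, (rtg_mono Finset.inter_subset_left hr).tail hxuL⟩

lemma reach_decomp (hT : T.IsTree) {u v : V} (huv : T.Adj u v) (S : Finset V) (hu : u ∉ S)
    {L : Finset (V × V)} (hL : L ⊆ cutE T u v) :
    Reaches L S u ↔ ∃ x ∈ (T.neighborFinset u).erase v,
      (x, u) ∈ L ∧ Reaches (L ∩ sideE T x u) S x := by
  constructor
  · rintro ⟨s, hs, hr⟩
    have hsu : s ≠ u := fun h => hu (h ▸ hs)
    have hLE : L ⊆ treeEdges T := hL.trans (cutE_subset T u v)
    obtain ⟨x, hxL, hrx⟩ := last_step T hT L hLE s u hsu hr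
    have hadj : T.Adj x u := (mem_treeEdges T).mp (hLE hxL)
    have hxv : x ≠ v := by
      rintro rfl
      have hmem := hL hxL
      simp [cutE] at hmem
    have hsub : L \ ({(u, x), (x, u)} : Finset (V × V)) ⊆ cutE T x u := by
      show _ ⊆ treeEdges T \ ({(x, u), (u, x)} : Finset (V × V))
      rw [Finset.pair_comm (x, u) (u, x)]
      exact Finset.sdiff_subset_sdiff hLE (le_refl _)
    have hconf := rtg_confine T hsub hrx (x_mem_side T x u)
    refine ⟨x, Finset.mem_erase.mpr ⟨hxv, (T.mem_neighborFinset u x).mpr hadj.symm⟩,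
      hxL, s, hs, rtg_mono ?_ hconf⟩
    intro e he
    have h1 := Finset.mem_filter.mp he
    have h2 := Finset.mem_sdiff.mp h1.1
    exact Finset.mem_inter.mpr ⟨h2.1, Finset.mem_filter.mpr ⟨hLE h2.1, h1.2⟩⟩
  · rintro ⟨x, _, hxL, hres⟩
    exact reach_step T S hxL hres

lemma side_disjoint (hT : T.IsTree) {u x y : V} (hx : T.Adj u x) (hy : T.Adj u y) (hxy : x ≠ y)
    {z : V} (hz : z ∈ side T x u) : z ∉ side T y u := by
  intro hzy
  have hux : u ∉ side T y u := u_not_mem_side T hT hy.symm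
  have hry := mem_comp'.mp hzy
  have h2 := rtg_avoid (y := y) (u := u) hux hry
  have hsub : ((cutE T y u).filter fun e => e.1 ≠ u ∧ e.2 ≠ u) ⊆ cutE T u x := by
    intro e he
    have h1 := Finset.mem_filter.mp he
    refine Finset.mem_sdiff.mpr ⟨cutE_subset T y u h1.1, fun hm => ?_⟩
    rcases Finset.mem_insert.mp hm with h3 | h3
    · subst h3; exact h1.2.1 rfl
    · rw [Finset.mem_singleton] at h3; subst h3; exact h1.2.2 rfl
  have hhead : (u, y) ∈ cutE T u x := by
    refine Finset.mem_sdiff.mpr ⟨(mem_treeEdges T).mpr hy, fun hm => ?_⟩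
    simp only [Finset.mem_insert, Finset.mem_singleton, Prod.mk.injEq] at hm
    rcases hm with ⟨h3, h4⟩ | ⟨h3, h4⟩
    · exact hxy h4.symm
    · exact hx.ne h3
  have hzu : z ∈ comp (cutE T u x) u :=
    mem_comp'.mpr (Relation.ReflTransGen.head hhead (rtg_mono hsub h2))
  have hzx : z ∈ comp (cutE T x u) x := hz
  rw [cutE_comm T u x] at hzu
  exact comp_cutE_disjoint T hT hx.symm hzx hzu

lemma Dx_disjoint (hT : T.IsTree) {u x y : V} (hx : T.Adj u x) (hy : T.Adj u y) (hxy : x ≠ y) :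
    Disjoint (Dx T x u) (Dx T y u) := by
  rw [Finset.disjoint_left]
  intro e hex hey
  rcases Finset.mem_insert.mp hex with rfl | hex
  · rcases Finset.mem_insert.mp hey with he | hey
    · simp only [Prod.mk.injEq] at he
      exact hxy he.1
    · exact u_not_mem_side T hT hy.symm (Finset.mem_filter.mp hey).2.2
  · rcases Finset.mem_insert.mp hey with rfl | hey
    · exact u_not_mem_side T hT hx.symm (Finset.mem_filter.mp hex).2.2
    · exact side_disjoint T hT hx hy hxy (Finset.mem_filter.mp hex).2.1
        (Finset.mem_filter.mp hey).2.1

lemma factor_sum (hT : T.IsTree) (q : V × V → ℝ) (S : Finset V) {x u : V} (hxu : T.Adj x u) :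
    ∑ L ∈ (Dx T x u).powerset, edgeWeight (Dx T x u) q L * chi T S x u L
      = apSub (treeEdges T) q S x u * q (x, u) := by
  have hd : Disjoint ({(x, u)} : Finset (V × V)) (sideE T x u) :=
    Finset.disjoint_singleton_left.mpr (xu_not_mem_sideE T hT hxu)
  have hins : Dx T x u = {(x, u)} ∪ sideE T x u := Finset.insert_eq _ _
  have hsplit := sum_mul_split {(x, u)} (sideE T x u) hd q
    (fun L => if (x, u) ∈ L then (1 : ℝ) else 0)
    (fun L => if Reaches (L ∩ sideE T x u) S x then (1 : ℝ) else 0)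
    (fun L _ => ind_congr (by
      constructor
      · intro h; exact Finset.mem_inter.mpr ⟨h, Finset.mem_singleton_self _⟩
      · intro h; exact (Finset.mem_inter.mp h).1))
    (fun L _ => ind_congr (by rw [Finset.inter_assoc, Finset.inter_self]))
  have hLHS : ∑ L ∈ (Dx T x u).powerset, edgeWeight (Dx T x u) q L * chi T S x u L
      = ∑ L ∈ ({(x, u)} ∪ sideE T x u).powerset,
          edgeWeight ({(x, u)} ∪ sideE T x u) q L *
            ((if (x, u) ∈ L then (1 : ℝ) else 0) *
              (if Reaches (L ∩ sideE T x u) S x then (1 : ℝ) else 0)) := by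
    rw [← hins]
    exact Finset.sum_congr rfl fun L _ => by rw [chi, ind_and]
  have h1 : ∑ L ∈ ({(x, u)} : Finset (V × V)).powerset,
      edgeWeight {(x, u)} q L * (if (x, u) ∈ L then (1 : ℝ) else 0) = q (x, u) := by
    rw [show ({(x, u)} : Finset (V × V)) = insert (x, u) ∅ from rfl,
      Finset.sum_powerset_insert (by simp)]
    simp [edgeWeight]
  have h2 : ∑ L ∈ (sideE T x u).powerset,
      edgeWeight (sideE T x u) q L *
        (if Reaches (L ∩ sideE T x u) S x then (1 : ℝ) else 0)
      = apSub (treeEdges T) q S x u := by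
    rw [apSub_eq_ap_sideE T hT q S hxu]
    unfold ap
    refine Finset.sum_congr rfl fun L hL => ?_
    rw [Finset.mem_powerset] at hL
    rw [Finset.inter_eq_left.mpr hL]
  rw [hLHS, hsplit, h1, h2, mul_comm]

lemma chi_le_ind (S : Finset V) (x u : V) (L : Finset (V × V)) :
    chi T S x u L ≤ if Reaches L S u then (1 : ℝ) else 0 := by
  unfold chi
  by_cases h : (x, u) ∈ L ∧ Reaches (L ∩ sideE T x u) S x
  · rw [if_pos h, if_pos (reach_step T S h.1 h.2)]
  · rw [if_neg h]
    by_cases h' : Reaches L S u <;> simp [h']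

lemma apSub_mul_le_ap (hT : T.IsTree) (q : V × V → ℝ) (hq0 : ∀ e, 0 ≤ q e) (hq1 : ∀ e, q e ≤ 1)
    (S : Finset V) {u w : V} (hw : T.Adj w u) :
    apSub (treeEdges T) q S w u * q (w, u) ≤ ap (treeEdges T) q S u := by
  rw [← factor_sum T hT q S hw]
  have hDsub : Dx T w u ⊆ treeEdges T := by
    intro e he
    rcases Finset.mem_insert.mp he with rfl | he
    · exact (mem_treeEdges T).mpr hw
    · exact (Finset.mem_filter.mp he).1
  have hres := sum_mul_restrict (Dx T w u) (treeEdges T) hDsub q (chi T S w u)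
    (fun L _ => (chi_dep T S w u L (Dx T w u) (Finset.mem_insert_self _ _)
      (Finset.subset_insert _ _)).symm)
  rw [← hres]
  unfold ap
  refine Finset.sum_le_sum fun L _ => ?_
  exact mul_le_mul_of_nonneg_left (chi_le_ind T S w u L)
    (edgeWeight_nonneg (treeEdges T) q hq0 hq1 L)

lemma one_sub_apSub (hT : T.IsTree) (q : V × V → ℝ) (S : Finset V) {u v : V}
    (hu : u ∉ S) (huv : T.Adj u v) :
    1 - apSub (treeEdges T) q S u v
      = ∏ x ∈ (T.neighborFinset u).erase v,
          (1 - apSub (treeEdges T) q S x u * q (x, u)) := by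
  set N := (T.neighborFinset u).erase v with hN
  have hNadj : ∀ x ∈ N, T.Adj x u ∧ x ≠ v := fun x hx =>
    ⟨((T.mem_neighborFinset u x).mp (Finset.mem_erase.mp hx).2).symm,
      (Finset.mem_erase.mp hx).1⟩
  have hEv : treeEdges T \ ({(v, u), (u, v)} : Finset (V × V)) = cutE T u v :=
    cutE_comm T v u
  have h1 : apSub (treeEdges T) q S u v = ap (cutE T u v) q S u := by
    unfold apSub
    rw [hEv]
  have hC4 : ∀ L ∈ (cutE T u v).powerset,
      edgeWeight (cutE T u v) q L -
          edgeWeight (cutE T u v) q L * (if Reaches L S u then (1 : ℝ) else 0)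
        = edgeWeight (cutE T u v) q L * ∏ x ∈ N, (1 - chi T S x u L) := by
    intro L hL
    rw [Finset.mem_powerset] at hL
    have hdec := reach_decomp T hT huv S hu hL
    have hkey : (1 : ℝ) - (if Reaches L S u then (1 : ℝ) else 0)
        = ∏ x ∈ N, (1 - chi T S x u L) := by
      by_cases hR : Reaches L S u
      · rw [if_pos hR, sub_self]
        obtain ⟨x, hxN, hev⟩ := hdec.mp hR
        exact (Finset.prod_eq_zero hxN (by rw [chi, if_pos hev, sub_self])).symm
      · rw [if_neg hR, sub_zero]
        refine (Finset.prod_eq_one fun x hx => ?_).symm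
        rw [chi, if_neg fun hev => hR (hdec.mpr ⟨x, hx, hev⟩), sub_zero]
    calc edgeWeight (cutE T u v) q L -
          edgeWeight (cutE T u v) q L * (if Reaches L S u then (1 : ℝ) else 0)
        = edgeWeight (cutE T u v) q L *
            (1 - (if Reaches L S u then (1 : ℝ) else 0)) := by ring
      _ = _ := by rw [hkey]
  set DD := N.biUnion (fun x => Dx T x u) with hDD
  have hDsub : DD ⊆ cutE T u v := by
    intro e he
    obtain ⟨x, hx, hex⟩ := Finset.mem_biUnion.mp he
    obtain ⟨hadj, hxv⟩ := hNadj x hx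
    rcases Finset.mem_insert.mp hex with rfl | hex
    · refine Finset.mem_sdiff.mpr ⟨(mem_treeEdges T).mpr hadj, fun hm => ?_⟩
      simp only [Finset.mem_insert, Finset.mem_singleton, Prod.mk.injEq] at hm
      rcases hm with ⟨h3, h4⟩ | ⟨h3, h4⟩
      · exact hadj.ne h3
      · exact hxv h3
    · have h1' := Finset.mem_filter.mp hex
      have hus := u_not_mem_side T hT hadj
      refine Finset.mem_sdiff.mpr ⟨h1'.1, fun hm => ?_⟩
      rcases Finset.mem_insert.mp hm with h3 | h3
      · subst h3; exact hus h1'.2.1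
      · rw [Finset.mem_singleton] at h3; subst h3; exact hus h1'.2.2
  have hdepDD : ∀ L, L ⊆ cutE T u v →
      (∏ x ∈ N, (1 - chi T S x u L)) = ∏ x ∈ N, (1 - chi T S x u (L ∩ DD)) := by
    intro L _
    refine Finset.prod_congr rfl fun x hx => ?_
    have hmem : (x, u) ∈ DD := Finset.mem_biUnion.mpr ⟨x, hx, Finset.mem_insert_self _ _⟩
    have hside : sideE T x u ⊆ DD :=
      (Finset.subset_insert _ _).trans (Finset.subset_biUnion_of_mem (fun x => Dx T x u) hx)
    rw [chi_dep T S x u L DD hmem hside]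
  have hdepDx : ∀ x ∈ N, ∀ L, (1 - chi T S x u L) = (1 - chi T S x u (L ∩ Dx T x u)) :=
    fun x _ L => by
      rw [chi_dep T S x u L (Dx T x u) (Finset.mem_insert_self _ _) (Finset.subset_insert _ _)]
  have step1 : 1 - ap (cutE T u v) q S u
      = ∑ L ∈ (cutE T u v).powerset,
          edgeWeight (cutE T u v) q L * ∏ x ∈ N, (1 - chi T S x u L) := by
    conv_lhs => rw [show (1 : ℝ) = ∑ L ∈ (cutE T u v).powerset, edgeWeight (cutE T u v) q L
      from (sum_edgeWeight (cutE T u v) q).symm]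
    unfold ap
    rw [← Finset.sum_sub_distrib]
    exact Finset.sum_congr rfl hC4
  have step2 : ∑ L ∈ (cutE T u v).powerset,
        edgeWeight (cutE T u v) q L * ∏ x ∈ N, (1 - chi T S x u L)
      = ∑ L ∈ DD.powerset, edgeWeight DD q L * ∏ x ∈ N, (1 - chi T S x u L) :=
    sum_mul_restrict DD (cutE T u v) hDsub q _ hdepDD
  have step3 : ∑ L ∈ DD.powerset, edgeWeight DD q L * ∏ x ∈ N, (1 - chi T S x u L)
      = ∏ x ∈ N, ∑ L ∈ (Dx T x u).powerset,
          edgeWeight (Dx T x u) q L * (1 - chi T S x u L) :=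
    sum_mul_prod_family (fun x => Dx T x u) q (fun x L => 1 - chi T S x u L) N
      (fun x hx y hy hxy =>
        Dx_disjoint T hT (hNadj x hx).1.symm (hNadj y hy).1.symm hxy)
      hdepDx
  have step4 : ∀ x ∈ N, ∑ L ∈ (Dx T x u).powerset,
      edgeWeight (Dx T x u) q L * (1 - chi T S x u L)
        = 1 - apSub (treeEdges T) q S x u * q (x, u) := by
    intro x hx
    have hrw : ∀ L ∈ (Dx T x u).powerset,
        edgeWeight (Dx T x u) q L * (1 - chi T S x u L)
          = edgeWeight (Dx T x u) q L - edgeWeight (Dx T x u) q L * chi T S x u L :=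
      fun L _ => by ring
    rw [Finset.sum_congr rfl hrw, Finset.sum_sub_distrib, sum_edgeWeight,
      factor_sum T hT q S (hNadj x hx).1]
  rw [h1, step1, step2, step3]
  exact Finset.prod_congr rfl step4

end AuxTree

/-- On a bidirected tree where every non-seed node is activated with probability
strictly less than one, for every non-seed node `u` and two distinct neighbors
`v, w` of `u`:
`∏_{x ∈ N(u)\{v,w}} (1 − ap_B(x\u)·p^B_{xu})
  = (1 − ap_B(u\v)) / (1 − ap_B(w\u)·p^B_{wu})`. -/
theorem prod_erase_two_eq_div [Fintype V] [DecidableEq V]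
    (T : SimpleGraph V) [DecidableRel T.Adj] (hT : T.IsTree)
    (p p' : V × V → ℝ)
    (hp0 : ∀ e, 0 ≤ p e) (hpp' : ∀ e, p e ≤ p' e) (hp'1 : ∀ e, p' e ≤ 1)
    (S B : Finset V)
    (hlt : ∀ x, x ∉ S → ap (treeEdges T) (pB p p' B) S x < 1)
    (u : V) (hu : u ∉ S) (v w : V) (hv : T.Adj u v) (hw : T.Adj u w)
    (hvw : v ≠ w) :
    ∏ x ∈ ((T.neighborFinset u).erase v).erase w,
        (1 - apSub (treeEdges T) (pB p p' B) S x u * pB p p' B (x, u)) =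
      (1 - apSub (treeEdges T) (pB p p' B) S u v) /
        (1 - apSub (treeEdges T) (pB p p' B) S w u * pB p p' B (w, u)) := by
  have hq0 : ∀ e, 0 ≤ pB p p' B e := fun e => by
    unfold pB
    split
    · exact (hp0 e).trans (hpp' e)
    · exact hp0 e
  have hq1 : ∀ e, pB p p' B e ≤ 1 := fun e => by
    unfold pB
    split
    · exact hp'1 e
    · exact (hpp' e).trans (hp'1 e)
  have hwv : w ∈ (T.neighborFinset u).erase v :=
    Finset.mem_erase.mpr ⟨hvw.symm, (T.mem_neighborFinset u w).mpr hw⟩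
  have hB := one_sub_apSub T hT (pB p p' B) S hu hv
  have hle := apSub_mul_le_ap T hT (pB p p' B) hq0 hq1 S hw.symm
  have hpos : 0 < 1 - apSub (treeEdges T) (pB p p' B) S w u * pB p p' B (w, u) := by
    have := hlt u hu
    linarith
  have hkey := Finset.mul_prod_erase ((T.neighborFinset u).erase v)
    (fun x => 1 - apSub (treeEdges T) (pB p p' B) S x u * pB p p' B (x, u)) hwv
  rw [eq_div_iff (ne_of_gt hpos), hB, ← hkey]
  ring

end
end

section
/- Let G be a bidirected tree rooted at a node r, with seed set S and boost set B. For a node v with parent u, let T_v denote the subtree rooted at v, let c_v be the probability that v is activated in T_v (under the live-edge model restricted to T_v, with seeds S ∩ T_v and edge probabilities p^B), and let f_v be the probability that u is activated in G \ T_v (with seeds S \ T_v and edge probabilities p^B); set f_r = 0. Then for every node v (with parent u): ap_B(v) = 1 − (1 − f_v · p^B_{uv})(1 − c_v), and consequently Δ_S(B) = ∑_{v ∈ V} (1 − (1 − f_v · p^B_{uv})(1 − c_v) − ap_∅(v)), where for the root the term f_v · p^B_{uv} is read as 0. -/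
open Finset
open scoped Classical

noncomputable section

variable {V : Type*}

namespace ApDecomp

open Relation

set_option linter.unusedSectionVars false

lemma reaches_mono {L L' : Finset (V × V)} (h : L ⊆ L') {S : Finset V} {v : V}
    (hr : Reaches L S v) : Reaches L' S v := by
  obtain ⟨s, hs, hst⟩ := hr
  exact ⟨s, hs, ReflTransGen.mono (fun a b hab => h hab) _ _ hst⟩

lemma rtg_symm {K : Finset (V × V)} (hK : ∀ a b, (a, b) ∈ K → (b, a) ∈ K)
    {a b : V} (h : ReflTransGen (fun x y => (x, y) ∈ K) a b) :
    ReflTransGen (fun x y => (x, y) ∈ K) b a := by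
  induction h with
  | refl => exact .refl
  | tail _ hstep ih => exact (ReflTransGen.single (hK _ _ hstep)).trans ih

variable [DecidableEq V]

lemma sum_edgeWeight (E : Finset (V × V)) (p : V × V → ℝ) :
    ∑ L ∈ E.powerset, edgeWeight E p L = 1 := by
  have h := Finset.prod_add p (fun e => 1 - p e) E
  simp only [add_sub_cancel, Finset.prod_const_one] at h
  simpa [edgeWeight] using h.symm

lemma edgeWeight_insert_mem (p : V × V → ℝ) {E L : Finset (V × V)} {a : V × V}
    (ha : a ∉ E) (hL : L ⊆ E) :
    edgeWeight (insert a E) p (insert a L) = p a * edgeWeight E p L := by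
  have haL : a ∉ L := fun h => ha (hL h)
  have hs : insert a E \ insert a L = E \ L := by
    ext x
    simp only [Finset.mem_sdiff, Finset.mem_insert]
    constructor
    · rintro ⟨hx | hx, hx2⟩
      · exact absurd (Or.inl hx) hx2
      · exact ⟨hx, fun h => hx2 (Or.inr h)⟩
    · rintro ⟨hx, hx2⟩
      exact ⟨Or.inr hx, by rintro (rfl | h) <;> [exact ha hx; exact hx2 h]⟩
  rw [edgeWeight, edgeWeight, hs, Finset.prod_insert haL]
  ring

lemma edgeWeight_insert_not (p : V × V → ℝ) {E L : Finset (V × V)} {a : V × V}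
    (ha : a ∉ E) (hL : L ⊆ E) :
    edgeWeight (insert a E) p L = (1 - p a) * edgeWeight E p L := by
  have haL : a ∉ L := fun h => ha (hL h)
  have hs : insert a E \ L = insert a (E \ L) := by
    rw [Finset.insert_sdiff_of_notMem _ haL]
  have haEL : a ∉ E \ L := fun h => ha (Finset.mem_sdiff.1 h).1
  rw [edgeWeight, edgeWeight, hs, Finset.prod_insert haEL]
  ring

lemma edgeWeight_union (p : V × V → ℝ) {E₁ E₂ L₁ L₂ : Finset (V × V)}
    (hd : Disjoint E₁ E₂) (h1 : L₁ ⊆ E₁) (h2 : L₂ ⊆ E₂) :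
    edgeWeight (E₁ ∪ E₂) p (L₁ ∪ L₂) = edgeWeight E₁ p L₁ * edgeWeight E₂ p L₂ := by
  have hdL : Disjoint L₁ L₂ := hd.mono h1 h2
  have hsd : (E₁ ∪ E₂) \ (L₁ ∪ L₂) = (E₁ \ L₁) ∪ (E₂ \ L₂) := by
    ext x
    simp only [Finset.mem_sdiff, Finset.mem_union]
    constructor
    · rintro ⟨hx | hx, hx2⟩
      · exact Or.inl ⟨hx, fun h => hx2 (Or.inl h)⟩
      · exact Or.inr ⟨hx, fun h => hx2 (Or.inr h)⟩
    · rintro (⟨hx, hx2⟩ | ⟨hx, hx2⟩)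
      · refine ⟨Or.inl hx, ?_⟩
        rintro (h | h)
        · exact hx2 h
        · exact (Finset.disjoint_left.1 hd) hx (h2 h)
      · refine ⟨Or.inr hx, ?_⟩
        rintro (h | h)
        · exact (Finset.disjoint_right.1 hd) hx (h1 h)
        · exact hx2 h
  have hdE : Disjoint (E₁ \ L₁) (E₂ \ L₂) :=
    (hd.mono (Finset.sdiff_subset) (Finset.sdiff_subset))
  rw [edgeWeight, edgeWeight, edgeWeight, hsd, Finset.prod_union hdL, Finset.prod_union hdE]
  ring

lemma sum_split (p : V × V → ℝ) {E₁ E₂ : Finset (V × V)} (hd : Disjoint E₁ E₂)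
    (F : Finset (V × V) → ℝ) :
    ∑ L ∈ (E₁ ∪ E₂).powerset, edgeWeight (E₁ ∪ E₂) p L * F L =
      ∑ L₁ ∈ E₁.powerset, ∑ L₂ ∈ E₂.powerset,
        edgeWeight E₁ p L₁ * edgeWeight E₂ p L₂ * F (L₁ ∪ L₂) := by
  rw [← Finset.sum_product']
  refine Finset.sum_nbij' (fun L => (L ∩ E₁, L ∩ E₂)) (fun P => P.1 ∪ P.2) ?_ ?_ ?_ ?_ ?_
  · intro L hL
    simp only [Finset.mem_product, Finset.mem_powerset]
    exact ⟨Finset.inter_subset_right, Finset.inter_subset_right⟩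
  · intro P hP
    simp only [Finset.mem_product, Finset.mem_powerset] at hP ⊢
    exact Finset.union_subset_union hP.1 hP.2
  · intro L hL
    simp only [Finset.mem_powerset] at hL
    show L ∩ E₁ ∪ L ∩ E₂ = L
    rw [← Finset.inter_union_distrib_left, Finset.inter_eq_left.2 hL]
  · intro P hP
    simp only [Finset.mem_product, Finset.mem_powerset] at hP
    obtain ⟨h1, h2⟩ := hP
    have e1 : (P.1 ∪ P.2) ∩ E₁ = P.1 := by
      ext x
      simp only [Finset.mem_inter, Finset.mem_union]
      constructor
      · rintro ⟨hx1 | hx1, hx2⟩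
        · exact hx1
        · exact absurd hx2 fun h => Finset.disjoint_right.1 hd (h2 hx1) h
      · exact fun hx => ⟨Or.inl hx, h1 hx⟩
    have e2 : (P.1 ∪ P.2) ∩ E₂ = P.2 := by
      ext x
      simp only [Finset.mem_inter, Finset.mem_union]
      constructor
      · rintro ⟨hx1 | hx1, hx2⟩
        · exact absurd hx2 fun h => Finset.disjoint_left.1 hd (h1 hx1) h
        · exact hx1
      · exact fun hx => ⟨Or.inr hx, h2 hx⟩
    show ((P.1 ∪ P.2) ∩ E₁, (P.1 ∪ P.2) ∩ E₂) = P
    rw [e1, e2]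
  · intro L hL
    simp only [Finset.mem_powerset] at hL
    have h1 : L ∩ E₁ ⊆ E₁ := Finset.inter_subset_right
    have h2 : L ∩ E₂ ⊆ E₂ := Finset.inter_subset_right
    have hU : L ∩ E₁ ∪ L ∩ E₂ = L := by
      rw [← Finset.inter_union_distrib_left, Finset.inter_eq_left.2 hL]
    rw [← edgeWeight_union p hd h1 h2, hU]

variable [Fintype V]

lemma separation {T : SimpleGraph V} [DecidableRel T.Adj] (hT : T.IsTree)
    {u v : V} (huv : T.Adj u v) :
    ¬ Relation.ReflTransGen
        (fun a b => (a, b) ∈ treeEdges T \ ({(u, v), (v, u)} : Finset (V × V)))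
        u v := by
  intro h
  have hbridge : T.IsBridge s(u, v) :=
    (SimpleGraph.isAcyclic_iff_forall_adj_isBridge.1 hT.IsAcyclic) huv
  have hreach : (T \ SimpleGraph.fromEdgeSet {s(u, v)}).Reachable u v := by
    rw [SimpleGraph.reachable_iff_reflTransGen]
    refine ReflTransGen.mono ?_ _ _ h
    intro a b hab
    rw [Finset.mem_sdiff] at hab
    obtain ⟨hab1, hab2⟩ := hab
    have hadj : T.Adj a b := by
      simpa [treeEdges] using hab1
    rw [SimpleGraph.sdiff_adj, SimpleGraph.fromEdgeSet_adj]
    refine ⟨hadj, ?_⟩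
    rintro ⟨hmem, -⟩
    simp only [Set.mem_singleton_iff, Sym2.eq_iff] at hmem
    apply hab2
    simp only [Finset.mem_insert, Finset.mem_singleton, Prod.mk.injEq]
    rcases hmem with ⟨rfl, rfl⟩ | ⟨rfl, rfl⟩
    · exact Or.inl ⟨rfl, rfl⟩
    · exact Or.inr ⟨rfl, rfl⟩
  exact (SimpleGraph.isBridge_iff.1 hbridge) hreach

lemma mem_comp {E : Finset (V × V)} {v w : V} :
    w ∈ comp E v ↔ ReflTransGen (fun a b => (a, b) ∈ E) v w := by
  simp [comp]

lemma localize {E' L : Finset (V × V)} (hsym : ∀ a b, (a, b) ∈ E' → (b, a) ∈ E')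
    (hL : L ⊆ E') {s w : V} (h : ReflTransGen (fun a b => (a, b) ∈ L) s w) :
    ReflTransGen (fun a b => (a, b) ∈ L.filter (fun e => e.1 ∈ comp E' w)) s w := by
  induction h using ReflTransGen.head_induction_on with
  | refl => exact .refl
  | head hstep hrest ih =>
    rename_i a b
    refine ReflTransGen.head ?_ ih
    rw [Finset.mem_filter]
    refine ⟨hstep, ?_⟩
    rw [mem_comp]
    have hbw : ReflTransGen (fun x y => (x, y) ∈ E') b w :=
      ReflTransGen.mono (fun x y hxy => hL hxy) _ _ hrest
    have hwb := rtg_symm hsym hbw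
    exact hwb.tail (hsym _ _ (hL hstep))

lemma reaches_iff_localize {E' L : Finset (V × V)}
    (hsym : ∀ a b, (a, b) ∈ E' → (b, a) ∈ E') (hL : L ⊆ E') {S : Finset V} {w : V} :
    Reaches L S w ↔ Reaches (L ∩ E'.filter (fun e => e.1 ∈ comp E' w)) S w := by
  constructor
  · rintro ⟨s, hs, h⟩
    refine ⟨s, hs, ReflTransGen.mono ?_ _ _ (localize hsym hL h)⟩
    intro a b hab
    rw [Finset.mem_filter] at hab
    rw [Finset.mem_inter, Finset.mem_filter]
    exact ⟨hab.1, hL hab.1, hab.2⟩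
  · rintro ⟨s, hs, h⟩
    exact ⟨s, hs, ReflTransGen.mono (fun a b hab => (Finset.mem_inter.1 hab).1) _ _ h⟩

lemma reach_decomp {E' L' X : Finset (V × V)} {u v : V}
    (hsep_uv : ¬ ReflTransGen (fun a b => (a, b) ∈ E') u v)
    (hsep_vu : ¬ ReflTransGen (fun a b => (a, b) ∈ E') v u)
    (hL : L' ⊆ E') (hX : X ⊆ ({(u, v), (v, u)} : Finset (V × V))) {s w : V}
    (h : ReflTransGen (fun a b => (a, b) ∈ L' ∪ X) s w) :
    ReflTransGen (fun a b => (a, b) ∈ L') s w ∨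
      ((u, v) ∈ X ∧ ReflTransGen (fun a b => (a, b) ∈ L') s u ∧
        ReflTransGen (fun a b => (a, b) ∈ L') v w) ∨
      ((v, u) ∈ X ∧ ReflTransGen (fun a b => (a, b) ∈ L') s v ∧
        ReflTransGen (fun a b => (a, b) ∈ L') u w) := by
  induction h with
  | refl => exact Or.inl .refl
  | tail _hab hstep ih =>
    rename_i w' w
    rw [Finset.mem_union] at hstep
    rcases hstep with hstep | hstep
    · rcases ih with h1 | ⟨hm, h1, h2⟩ | ⟨hm, h1, h2⟩
      · exact Or.inl (h1.tail hstep)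
      · exact Or.inr (Or.inl ⟨hm, h1, h2.tail hstep⟩)
      · exact Or.inr (Or.inr ⟨hm, h1, h2.tail hstep⟩)
    · have hstep' := hX hstep
      simp only [Finset.mem_insert, Finset.mem_singleton, Prod.mk.injEq] at hstep'
      rcases hstep' with ⟨rfl, rfl⟩ | heq
      · rcases ih with h1 | ⟨hm, h1, h2⟩ | ⟨hm, h1, h2⟩
        · exact Or.inr (Or.inl ⟨hstep, h1, .refl⟩)
        · exact absurd (ReflTransGen.mono (fun a b hab => hL hab) _ _ h2) hsep_vu
        · exact Or.inl h1
      · obtain ⟨hw', hw⟩ := heq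
        subst hw' hw
        rcases ih with h1 | ⟨hm, h1, h2⟩ | ⟨hm, h1, h2⟩
        · exact Or.inr (Or.inr ⟨hstep, h1, .refl⟩)
        · exact Or.inl h1
        · exact absurd (ReflTransGen.mono (fun a b hab => hL hab) _ _ h2) hsep_uv

lemma reaches_decomp_v {E' L' X : Finset (V × V)} {u v : V}
    (hsep_uv : ¬ ReflTransGen (fun a b => (a, b) ∈ E') u v)
    (hsep_vu : ¬ ReflTransGen (fun a b => (a, b) ∈ E') v u)
    (hL : L' ⊆ E') (hX : X ⊆ ({(u, v), (v, u)} : Finset (V × V))) {S : Finset V} :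
    Reaches (L' ∪ X) S v ↔ Reaches L' S v ∨ ((u, v) ∈ X ∧ Reaches L' S u) := by
  constructor
  · rintro ⟨s, hs, h⟩
    rcases reach_decomp hsep_uv hsep_vu hL hX h with h1 | ⟨hm, h1, h2⟩ | ⟨hm, h1, h2⟩
    · exact Or.inl ⟨s, hs, h1⟩
    · exact Or.inr ⟨hm, s, hs, h1⟩
    · exact absurd (ReflTransGen.mono (fun a b hab => hL hab) _ _ h2) hsep_uv
  · rintro (⟨s, hs, h⟩ | ⟨hm, s, hs, h⟩)
    · exact ⟨s, hs, ReflTransGen.mono (fun a b hab => Finset.mem_union_left _ hab) _ _ h⟩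
    · refine ⟨s, hs, ReflTransGen.tail (ReflTransGen.mono (fun a b hab => Finset.mem_union_left _ hab) _ _ h) ?_⟩
      exact Finset.mem_union_right _ hm

/-- Independence of the activation events of `u` and `v` when `u` and `v` are in
different components of the (symmetric) edge set `E'`. -/
lemma indep {E' : Finset (V × V)} (hsym : ∀ a b, (a, b) ∈ E' → (b, a) ∈ E')
    {u v : V}
    (hsep_vu : ¬ ReflTransGen (fun a b => (a, b) ∈ E') v u)
    (p : V × V → ℝ) (S : Finset V) :
    ∑ L ∈ E'.powerset, edgeWeight E' p L *
        ((if Reaches L S v then (1 : ℝ) else 0) * (if Reaches L S u then 1 else 0)) =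
      (∑ L ∈ E'.powerset, edgeWeight E' p L * (if Reaches L S v then 1 else 0)) *
      (∑ L ∈ E'.powerset, edgeWeight E' p L * (if Reaches L S u then 1 else 0)) := by
  set Ev : Finset (V × V) := E'.filter (fun e => e.1 ∈ comp E' v) with hEv
  set Eu : Finset (V × V) := E'.filter (fun e => e.1 ∈ comp E' u) with hEu
  set E₂ : Finset (V × V) := E' \ Ev with hE₂
  have hEvE : Ev ⊆ E' := Finset.filter_subset _ _
  have hU : Ev ∪ E₂ = E' := Finset.union_sdiff_of_subset hEvE
  have hd : Disjoint Ev E₂ := Finset.disjoint_sdiff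
  have hEuE₂ : Eu ⊆ E₂ := by
    intro e he
    rw [hEu, Finset.mem_filter] at he
    rw [hE₂, Finset.mem_sdiff]
    refine ⟨he.1, ?_⟩
    rw [hEv, Finset.mem_filter]
    rintro ⟨-, hev⟩
    rw [mem_comp] at hev he
    exact hsep_vu (hev.trans (rtg_symm hsym he.2))
  -- key facts for L₁ ⊆ Ev, L₂ ⊆ E₂
  have keyv : ∀ L₁ L₂ : Finset (V × V), L₁ ⊆ Ev → L₂ ⊆ E₂ →
      (Reaches (L₁ ∪ L₂) S v ↔ Reaches L₁ S v) := by
    intro L₁ L₂ h1 h2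
    have hL : L₁ ∪ L₂ ⊆ E' :=
      Finset.union_subset (h1.trans hEvE) (h2.trans Finset.sdiff_subset)
    have e1 : (L₁ ∪ L₂) ∩ Ev = L₁ ∩ Ev := by
      ext x
      simp only [Finset.mem_inter, Finset.mem_union]
      constructor
      · rintro ⟨hx1 | hx1, hx2⟩
        · exact ⟨hx1, hx2⟩
        · exact absurd hx2 (Finset.disjoint_right.1 hd (h2 hx1))
      · rintro ⟨hx1, hx2⟩
        exact ⟨Or.inl hx1, hx2⟩
    rw [reaches_iff_localize hsym hL (S := S) (w := v), ← hEv, e1,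
      ← reaches_iff_localize hsym (h1.trans hEvE) (S := S) (w := v)]
  have keyu : ∀ L₁ L₂ : Finset (V × V), L₁ ⊆ Ev → L₂ ⊆ E₂ →
      (Reaches (L₁ ∪ L₂) S u ↔ Reaches L₂ S u) := by
    intro L₁ L₂ h1 h2
    have hL : L₁ ∪ L₂ ⊆ E' :=
      Finset.union_subset (h1.trans hEvE) (h2.trans Finset.sdiff_subset)
    have e1 : (L₁ ∪ L₂) ∩ Eu = L₂ ∩ Eu := by
      ext x
      simp only [Finset.mem_inter, Finset.mem_union]
      constructor
      · rintro ⟨hx1 | hx1, hx2⟩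
        · exact absurd hx2 fun hx2 =>
            (Finset.disjoint_left.1 hd (h1 hx1)) (hEuE₂ hx2)
        · exact ⟨hx1, hx2⟩
      · rintro ⟨hx1, hx2⟩
        exact ⟨Or.inr hx1, hx2⟩
    rw [reaches_iff_localize hsym hL (S := S) (w := u), ← hEu, e1,
      ← reaches_iff_localize hsym (h2.trans Finset.sdiff_subset) (S := S) (w := u)]
  have hv : ∑ L ∈ (Ev ∪ E₂).powerset, edgeWeight (Ev ∪ E₂) p L *
        (if Reaches L S v then (1 : ℝ) else 0) =
      ∑ L₁ ∈ Ev.powerset, edgeWeight Ev p L₁ * (if Reaches L₁ S v then (1 : ℝ) else 0) := by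
    rw [sum_split p hd]
    calc ∑ L₁ ∈ Ev.powerset, ∑ L₂ ∈ E₂.powerset,
          edgeWeight Ev p L₁ * edgeWeight E₂ p L₂ *
            (if Reaches (L₁ ∪ L₂) S v then (1 : ℝ) else 0)
        = ∑ L₁ ∈ Ev.powerset,
            (edgeWeight Ev p L₁ * (if Reaches L₁ S v then (1 : ℝ) else 0)) *
              ∑ L₂ ∈ E₂.powerset, edgeWeight E₂ p L₂ := by
          refine Finset.sum_congr rfl fun L₁ h1 => ?_
          rw [Finset.mem_powerset] at h1
          rw [Finset.mul_sum]
          refine Finset.sum_congr rfl fun L₂ h2 => ?_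
          rw [Finset.mem_powerset] at h2
          rw [if_congr (keyv L₁ L₂ h1 h2) rfl rfl]
          ring
      _ = _ := by
          rw [sum_edgeWeight]
          simp
  have hu : ∑ L ∈ (Ev ∪ E₂).powerset, edgeWeight (Ev ∪ E₂) p L *
        (if Reaches L S u then (1 : ℝ) else 0) =
      ∑ L₂ ∈ E₂.powerset, edgeWeight E₂ p L₂ * (if Reaches L₂ S u then (1 : ℝ) else 0) := by
    rw [sum_split p hd]
    calc ∑ L₁ ∈ Ev.powerset, ∑ L₂ ∈ E₂.powerset,
          edgeWeight Ev p L₁ * edgeWeight E₂ p L₂ *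
            (if Reaches (L₁ ∪ L₂) S u then (1 : ℝ) else 0)
        = ∑ L₁ ∈ Ev.powerset, edgeWeight Ev p L₁ *
            ∑ L₂ ∈ E₂.powerset, edgeWeight E₂ p L₂ *
              (if Reaches L₂ S u then (1 : ℝ) else 0) := by
          refine Finset.sum_congr rfl fun L₁ h1 => ?_
          rw [Finset.mem_powerset] at h1
          rw [Finset.mul_sum]
          refine Finset.sum_congr rfl fun L₂ h2 => ?_
          rw [Finset.mem_powerset] at h2
          rw [if_congr (keyu L₁ L₂ h1 h2) rfl rfl]
          ring
      _ = _ := by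
          rw [← Finset.sum_mul, sum_edgeWeight, one_mul]
  have hvu : ∑ L ∈ (Ev ∪ E₂).powerset, edgeWeight (Ev ∪ E₂) p L *
        ((if Reaches L S v then (1 : ℝ) else 0) * (if Reaches L S u then (1 : ℝ) else 0)) =
      (∑ L₁ ∈ Ev.powerset, edgeWeight Ev p L₁ * (if Reaches L₁ S v then (1 : ℝ) else 0)) *
        (∑ L₂ ∈ E₂.powerset, edgeWeight E₂ p L₂ * (if Reaches L₂ S u then (1 : ℝ) else 0)) := by
    rw [sum_split p hd, Finset.sum_mul_sum]
    refine Finset.sum_congr rfl fun L₁ h1 => ?_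
    rw [Finset.mem_powerset] at h1
    refine Finset.sum_congr rfl fun L₂ h2 => ?_
    rw [Finset.mem_powerset] at h2
    rw [if_congr (keyv L₁ L₂ h1 h2) rfl rfl, if_congr (keyu L₁ L₂ h1 h2) rfl rfl]
    ring
  rw [← hU, hv, hu, hvu]


set_option maxHeartbeats 2000000 in
lemma ap_eq {T : SimpleGraph V} [DecidableRel T.Adj] (hT : T.IsTree)
    (q : V × V → ℝ) (S : Finset V) {u v : V} (huv : T.Adj u v) :
    ap (treeEdges T) q S v =
      1 - (1 - ap (treeEdges T \ {(v, u), (u, v)}) q S u * q (u, v)) *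
        (1 - ap (treeEdges T \ {(u, v), (v, u)}) q S v) := by
  have hne : u ≠ v := huv.ne
  set E : Finset (V × V) := treeEdges T with hE
  set D : Finset (V × V) := {(u, v), (v, u)} with hD
  set E' : Finset (V × V) := E \ D with hE'
  have hDD : ({(v, u), (u, v)} : Finset (V × V)) = D := Finset.pair_comm _ _
  have he12 : ((u, v) : V × V) ≠ (v, u) := by
    intro h
    exact hne (congrArg Prod.fst h)
  have he1E : ((u, v) : V × V) ∈ E := by simp [hE, treeEdges, huv]
  have he2E : ((v, u) : V × V) ∈ E := by simp [hE, treeEdges, huv.symm]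
  have he1E' : ((u, v) : V × V) ∉ E' := by simp [hE', hD]
  have he2E' : ((v, u) : V × V) ∉ E' := by simp [hE', hD]
  have he1E2 : ((u, v) : V × V) ∉ insert ((v, u) : V × V) E' := by
    simp only [Finset.mem_insert]
    rintro (h | h)
    · exact he12 h
    · exact he1E' h
  have hEeq : insert ((u, v) : V × V) (insert ((v, u) : V × V) E') = E := by
    ext x
    simp only [Finset.mem_insert, hE', hD, Finset.mem_sdiff, Finset.mem_insert,
      Finset.mem_singleton]
    constructor
    · rintro (rfl | rfl | ⟨h, -⟩)
      · exact he1E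
      · exact he2E
      · exact h
    · intro hx
      by_cases h1 : x = (u, v)
      · exact Or.inl h1
      · by_cases h2 : x = (v, u)
        · exact Or.inr (Or.inl h2)
        · exact Or.inr (Or.inr ⟨hx, by tauto⟩)
  have hsym : ∀ a b, (a, b) ∈ E' → (b, a) ∈ E' := by
    intro a b hab
    rw [hE', Finset.mem_sdiff] at hab ⊢
    obtain ⟨h1, h2⟩ := hab
    have hadj : T.Adj a b := by simpa [hE, treeEdges] using h1
    refine ⟨by simp [hE, treeEdges, hadj.symm], ?_⟩
    intro hmem
    apply h2
    rw [hD] at hmem ⊢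
    simp only [Finset.mem_insert, Finset.mem_singleton, Prod.mk.injEq] at hmem ⊢
    tauto
  have hsep_uv : ¬ ReflTransGen (fun a b => (a, b) ∈ E') u v := separation hT huv
  have hsep_vu : ¬ ReflTransGen (fun a b => (a, b) ∈ E') v u := by
    have h := separation hT huv.symm
    rwa [hDD] at h
  -- abbreviations
  set cV : ℝ := ∑ L ∈ E'.powerset, edgeWeight E' q L *
    (if Reaches L S v then (1 : ℝ) else 0) with hcV
  set cU : ℝ := ∑ L ∈ E'.powerset, edgeWeight E' q L *
    (if Reaches L S u then (1 : ℝ) else 0) with hcU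
  set cVU : ℝ := ∑ L ∈ E'.powerset, edgeWeight E' q L *
    ((if Reaches L S v then (1 : ℝ) else 0) * (if Reaches L S u then (1 : ℝ) else 0)) with hcVU
  have huvX : ∀ X : Finset (V × V), X ⊆ D → ∀ L ∈ E'.powerset,
      (if Reaches (L ∪ X) S v then (1 : ℝ) else 0) =
        (if Reaches L S v ∨ ((u, v) ∈ X ∧ Reaches L S u) then (1 : ℝ) else 0) := by
    intro X hX L hL
    rw [Finset.mem_powerset] at hL
    exact if_congr (reaches_decomp_v hsep_uv hsep_vu hL (hD ▸ hX)) rfl rfl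
  -- the four configurations
  have key : ap E q S v = cV + q (u, v) * cU - q (u, v) * cVU := by
    rw [ap, ← hEeq, Finset.sum_powerset_insert he1E2, Finset.sum_powerset_insert he2E',
      Finset.sum_powerset_insert he2E']
    have t1 : ∀ L ∈ E'.powerset,
        edgeWeight (insert (u, v) (insert (v, u) E')) q L *
          (if Reaches L S v then (1 : ℝ) else 0) =
        (1 - q (u, v)) * ((1 - q (v, u)) *
          (edgeWeight E' q L * (if Reaches L S v then (1 : ℝ) else 0))) := by
      intro L hL
      rw [Finset.mem_powerset] at hL
      rw [edgeWeight_insert_not q he1E2 (hL.trans (Finset.subset_insert _ _)),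
        edgeWeight_insert_not q he2E' hL]
      ring
    have t2 : ∀ L ∈ E'.powerset,
        edgeWeight (insert (u, v) (insert (v, u) E')) q (insert (v, u) L) *
          (if Reaches (insert (v, u) L) S v then (1 : ℝ) else 0) =
        (1 - q (u, v)) * (q (v, u) *
          (edgeWeight E' q L * (if Reaches L S v then (1 : ℝ) else 0))) := by
      intro L hL
      have hL' := Finset.mem_powerset.1 hL
      have hins : insert ((v, u) : V × V) L = L ∪ {(v, u)} := by
        ext x
        simp only [Finset.mem_insert, Finset.mem_union, Finset.mem_singleton]
        tauto
      have hX : ({((v, u) : V × V)} : Finset (V × V)) ⊆ D := by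
        intro x hx
        rw [Finset.mem_singleton] at hx
        simp [hD, hx]
      have hiff := huvX {(v, u)} hX L hL
      rw [edgeWeight_insert_not q he1E2
          (Finset.insert_subset_insert _ hL' |>.trans (by rfl)),
        edgeWeight_insert_mem q he2E' hL', hins, hiff]
      have : ((u, v) : V × V) ∉ ({((v, u) : V × V)} : Finset (V × V)) := by
        simp [he12]
      simp only [this, false_and, or_false]
      ring
    have t3 : ∀ L ∈ E'.powerset,
        edgeWeight (insert (u, v) (insert (v, u) E')) q (insert (u, v) L) *
          (if Reaches (insert (u, v) L) S v then (1 : ℝ) else 0) =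
        q (u, v) * ((1 - q (v, u)) *
          (edgeWeight E' q L * (if Reaches L S v ∨ Reaches L S u then (1 : ℝ) else 0))) := by
      intro L hL
      have hL' := Finset.mem_powerset.1 hL
      have hins : insert ((u, v) : V × V) L = L ∪ {(u, v)} := by
        ext x
        simp only [Finset.mem_insert, Finset.mem_union, Finset.mem_singleton]
        tauto
      have hX : ({((u, v) : V × V)} : Finset (V × V)) ⊆ D := by
        intro x hx
        rw [Finset.mem_singleton] at hx
        simp [hD, hx]
      have hiff := huvX {(u, v)} hX L hL
      rw [edgeWeight_insert_mem q he1E2 (hL'.trans (Finset.subset_insert _ _)),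
        edgeWeight_insert_not q he2E' hL', hins, hiff]
      simp only [Finset.mem_singleton, true_and]
      ring
    have t4 : ∀ L ∈ E'.powerset,
        edgeWeight (insert (u, v) (insert (v, u) E')) q (insert (u, v) (insert (v, u) L)) *
          (if Reaches (insert (u, v) (insert (v, u) L)) S v then (1 : ℝ) else 0) =
        q (u, v) * (q (v, u) *
          (edgeWeight E' q L * (if Reaches L S v ∨ Reaches L S u then (1 : ℝ) else 0))) := by
      intro L hL
      have hL' := Finset.mem_powerset.1 hL
      have hins : insert ((u, v) : V × V) (insert ((v, u) : V × V) L) = L ∪ D := by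
        ext x
        simp only [Finset.mem_insert, Finset.mem_union, hD, Finset.mem_insert,
          Finset.mem_singleton]
        tauto
      have hiff := huvX D (by rfl) L hL
      rw [edgeWeight_insert_mem q he1E2 (Finset.insert_subset_insert _ hL'),
        edgeWeight_insert_mem q he2E' hL', hins, hiff]
      have : ((u, v) : V × V) ∈ D := by simp [hD]
      simp only [this, true_and]
      ring
    rw [Finset.sum_congr rfl t1, Finset.sum_congr rfl t2, Finset.sum_congr rfl t3,
      Finset.sum_congr rfl t4]
    rw [← Finset.mul_sum, ← Finset.mul_sum, ← Finset.mul_sum, ← Finset.mul_sum,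
      ← Finset.mul_sum, ← Finset.mul_sum, ← Finset.mul_sum, ← Finset.mul_sum]
    have hOr : ∑ L ∈ E'.powerset, edgeWeight E' q L *
        (if Reaches L S v ∨ Reaches L S u then (1 : ℝ) else 0) = cV + cU - cVU := by
      rw [hcV, hcU, hcVU, ← Finset.sum_add_distrib, ← Finset.sum_sub_distrib]
      refine Finset.sum_congr rfl fun L hL => ?_
      by_cases h1 : Reaches L S v <;> by_cases h2 : Reaches L S u <;>
        simp [h1, h2] <;> ring
    rw [hOr, ← hcV]
    ring
  have hindep : cVU = cV * cU := indep hsym hsep_vu q S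
  have hcV' : ap (treeEdges T \ {(u, v), (v, u)}) q S v = cV := by
    rw [hcV, ap]
  have hcU' : ap (treeEdges T \ {(v, u), (u, v)}) q S u = cU := by
    rw [hcU, ap]
    have : (treeEdges T \ {(v, u), (u, v)} : Finset (V × V)) = E' := by
      rw [hE', hDD, hD, hE]
    rw [this]
  rw [key, hindep, hcV', hcU']
  ring

lemma spread_eq_sum_ap (E : Finset (V × V)) (p : V × V → ℝ) (S : Finset V) :
    spread E p S = ∑ v : V, ap E p S v := by
  rw [spread, spreadOn]
  have h : ∀ L ∈ E.powerset,
      edgeWeight E p L * ((Finset.univ.filter (fun v => Reaches L S v)).card : ℝ) =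
        ∑ v : V, edgeWeight E p L * (if Reaches L S v then (1 : ℝ) else 0) := by
    intro L hL
    rw [Finset.card_filter]
    push_cast
    rw [Finset.mul_sum]
  rw [Finset.sum_congr rfl h, Finset.sum_comm]
  rfl

end ApDecomp

/-- On a bidirected tree rooted at `r` (with `parent v` adjacent to `v` for every
`v ≠ r`), writing `c_v = ap_B(v\parent v)` (the probability that `v` is activated
in the subtree `T_v`) and `f_v = ap_B(parent v \ v)` (the probability that the
parent of `v` is activated in `G \ T_v`), with `f_r = 0`, one has for every node
`v ≠ r`:
`ap_B(v) = 1 − (1 − f_v · p^B_{parent v, v}) · (1 − c_v)`,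
and consequently
`Δ_S(B) = ∑_{v ∈ V} (1 − (1 − f_v · p^B_{parent v, v})(1 − c_v) − ap_∅(v))`,
where for the root the term `f_v · p^B_{uv}` is read as `0` (so the root's term
is `ap_B(r) − ap_∅(r)`). -/
theorem ap_decomposition_rooted [Fintype V] [DecidableEq V]
    (T : SimpleGraph V) [DecidableRel T.Adj] (hT : T.IsTree)
    (p p' : V × V → ℝ)
    (hp0 : ∀ e, 0 ≤ p e) (hpp' : ∀ e, p e ≤ p' e) (hp'1 : ∀ e, p' e ≤ 1)
    (r : V) (parent : V → V) (hpar : ∀ v, v ≠ r → T.Adj (parent v) v)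
    (S B : Finset V) :
    (∀ v, v ≠ r →
      ap (treeEdges T) (pB p p' B) S v =
        1 - (1 - apSub (treeEdges T) (pB p p' B) S (parent v) v
                  * pB p p' B (parent v, v))
            * (1 - apSub (treeEdges T) (pB p p' B) S v (parent v))) ∧
    spread (treeEdges T) (pB p p' B) S - spread (treeEdges T) p S =
      ∑ v : V,
        ((if v = r then ap (treeEdges T) (pB p p' B) S v
          else 1 - (1 - apSub (treeEdges T) (pB p p' B) S (parent v) v
                        * pB p p' B (parent v, v))
                 * (1 - apSub (treeEdges T) (pB p p' B) S v (parent v)))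
          - ap (treeEdges T) p S v) := by
  have part1 : ∀ v, v ≠ r →
      ap (treeEdges T) (pB p p' B) S v =
        1 - (1 - apSub (treeEdges T) (pB p p' B) S (parent v) v
                  * pB p p' B (parent v, v))
            * (1 - apSub (treeEdges T) (pB p p' B) S v (parent v)) := by
    intro v hv
    have h := ApDecomp.ap_eq hT (pB p p' B) S (hpar v hv)
    simp only [apSub]
    exact h
  refine ⟨part1, ?_⟩
  have h2 : ∀ v ∈ (Finset.univ : Finset V),
      ((if v = r then ap (treeEdges T) (pB p p' B) S v
        else 1 - (1 - apSub (treeEdges T) (pB p p' B) S (parent v) v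
                      * pB p p' B (parent v, v))
               * (1 - apSub (treeEdges T) (pB p p' B) S v (parent v)))
        - ap (treeEdges T) p S v) =
      ap (treeEdges T) (pB p p' B) S v - ap (treeEdges T) p S v := by
    intro v hv
    by_cases hvr : v = r
    · rw [if_pos hvr]
    · rw [if_neg hvr, ← part1 v hvr]
  rw [Finset.sum_congr rfl h2, Finset.sum_sub_distrib,
    ApDecomp.spread_eq_sum_ap, ApDecomp.spread_eq_sum_ap]

end
end

section
/- Let G be a bidirected tree with seed set S and boost set B, let v be a node with neighbor u, and suppose v receives external influence through u independently with probability q (that is, in addition to the live-edge process inside G_{v\u}, an independent Bernoulli(q) event activates v). Then the expected number of activated nodes in G_{v\u} equals E₀ + q · g_B(v\u), where E₀ is the expected number of activated nodes in G_{v\u} with seed set S ∩ V(G_{v\u}) alone; i.e., the expected count is an affine function of q with slope g_B(v\u). -/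
open Finset
open scoped Classical

noncomputable section

variable {V : Type*}

/-- The subtree `G_{v\u}` extended with an external influence source (`none`)
that points to `v`: edges of `E \ {(u,v),(v,u)}` (embedded via `some`) plus the
edge `(none, some v)`. -/
def extEdges [Fintype V] [DecidableEq V] (E : Finset (V × V)) (v u : V) :
    Finset (Option V × Option V) :=
  ((E \ {(u, v), (v, u)}).image fun e =>
      ((some e.1 : Option V), (some e.2 : Option V))) ∪
    {((none : Option V), (some v : Option V))}

/-- Edge probabilities on the extended subtree: the external edge `(none, some v)`
is live with probability `q`; every embedded edge `(some a, some b)` keeps its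
probability `p (a, b)`. -/
def extP (p : V × V → ℝ) (v : V) (q : ℝ) : Option V × Option V → ℝ :=
  fun e => match e with
  | (none, some w) => if w = v then q else 0
  | (some a, some b) => p (a, b)
  | _ => 0

namespace AffineAux

/-- Embedding of edges into the `Option` type. -/
def fE : V × V → Option V × Option V := fun e => (some e.1, some e.2)

lemma fE_inj : Function.Injective (fE (V := V)) := by
  intro a b h
  simpa [fE, Prod.ext_iff] using h

lemma powerset_image_eq {α β : Type*} [DecidableEq α] [DecidableEq β]
    (s : Finset α) (f : α → β) :
    (s.image f).powerset = s.powerset.image (Finset.image f) := by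
  ext t
  simp only [Finset.mem_powerset, Finset.mem_image]
  constructor
  · intro ht
    refine ⟨s.filter (fun a => f a ∈ t), Finset.filter_subset _ _, ?_⟩
    ext b
    simp only [Finset.mem_image, Finset.mem_filter]
    constructor
    · rintro ⟨a, ⟨-, h⟩, rfl⟩; exact h
    · intro hb
      obtain ⟨a, ha, rfl⟩ := Finset.mem_image.1 (ht hb)
      exact ⟨a, ⟨ha, hb⟩, rfl⟩
  · rintro ⟨r, hr, rfl⟩
    exact Finset.image_subset_image hr

lemma some_edge_image [DecidableEq V] {L₀ : Finset (V × V)} {a : V} {c : Option V}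
    (h : ((some a : Option V), c) ∈ L₀.image fE) :
    ∃ b, c = some b ∧ (a, b) ∈ L₀ := by
  obtain ⟨e, he, heq⟩ := Finset.mem_image.1 h
  simp only [fE, Prod.mk.injEq, Option.some.injEq] at heq
  obtain ⟨h1, h2⟩ := heq
  exact ⟨e.2, h2.symm, by rwa [← h1, Prod.mk.eta]⟩

lemma some_edge_ins [DecidableEq V] {L₀ : Finset (V × V)} {v a : V} {c : Option V}
    (h : ((some a : Option V), c) ∈
      insert ((none : Option V), (some v : Option V)) (L₀.image fE)) :
    ∃ b, c = some b ∧ (a, b) ∈ L₀ := by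
  rcases Finset.mem_insert.1 h with h | h
  · exact absurd (Prod.ext_iff.1 h).1 (by simp)
  · exact some_edge_image h

lemma rtg_some_down {L₀ : Finset (V × V)} {L' : Finset (Option V × Option V)}
    (hL' : ∀ a (c : Option V), ((some a : Option V), c) ∈ L' →
      ∃ b, c = some b ∧ (a, b) ∈ L₀)
    {s : V} {y : Option V}
    (h : Relation.ReflTransGen (fun a b => (a, b) ∈ L') (some s) y) :
    ∃ x, y = some x ∧ Relation.ReflTransGen (fun a b => (a, b) ∈ L₀) s x := by
  induction h with
  | refl => exact ⟨s, rfl, Relation.ReflTransGen.refl⟩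
  | tail h1 h2 ih =>
    obtain ⟨x, rfl, hx⟩ := ih
    obtain ⟨b, rfl, hb⟩ := hL' _ _ h2
    exact ⟨b, rfl, hx.tail hb⟩

lemma rtg_lift {L₀ : Finset (V × V)} {L' : Finset (Option V × Option V)}
    (hL : ∀ a b, (a, b) ∈ L₀ → ((some a : Option V), (some b : Option V)) ∈ L')
    {s x : V} (h : Relation.ReflTransGen (fun a b => (a, b) ∈ L₀) s x) :
    Relation.ReflTransGen (fun a b => (a, b) ∈ L') (some s) (some x) :=
  Relation.ReflTransGen.lift (fun w => (some w : Option V)) (fun a b => hL a b) _ _ h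

lemma rtg_none_image [DecidableEq V] {L₀ : Finset (V × V)} {y : Option V}
    (h : Relation.ReflTransGen (fun a b => (a, b) ∈ L₀.image fE)
      (none : Option V) y) : y = none := by
  induction h with
  | refl => rfl
  | tail h1 h2 ih =>
    subst ih
    obtain ⟨e, -, heq⟩ := Finset.mem_image.1 h2
    simp [fE, Prod.ext_iff] at heq

lemma rtg_none_ins [DecidableEq V] {L₀ : Finset (V × V)} {v : V} {y : Option V}
    (h : Relation.ReflTransGen
      (fun a b => (a, b) ∈
        insert ((none : Option V), (some v : Option V)) (L₀.image fE))
      (none : Option V) y) :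
    y = none ∨ ∃ x, y = some x ∧
      Relation.ReflTransGen (fun a b => (a, b) ∈ L₀) v x := by
  induction h with
  | refl => exact Or.inl rfl
  | tail h1 h2 ih =>
    rcases ih with rfl | ⟨x, rfl, hx⟩
    · rcases Finset.mem_insert.1 h2 with h | h
      · rcases Prod.ext_iff.1 h with ⟨-, h2⟩
        exact Or.inr ⟨v, h2, Relation.ReflTransGen.refl⟩
      · obtain ⟨e, -, heq⟩ := Finset.mem_image.1 h
        simp [fE, Prod.ext_iff] at heq
    · obtain ⟨b, rfl, hb⟩ := some_edge_ins h2
      exact Or.inr ⟨b, rfl, hx.tail hb⟩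

lemma reaches_image [DecidableEq V] {L₀ : Finset (V × V)} {S₀ : Finset V} {x : V} :
    Reaches (L₀.image fE)
      (insert (none : Option V) (S₀.image (fun w => (some w : Option V))))
      (some x) ↔ Reaches L₀ S₀ x := by
  constructor
  · rintro ⟨s', hs', hpath⟩
    rcases Finset.mem_insert.1 hs' with rfl | hs'
    · exact absurd (rtg_none_image hpath) (by simp)
    · obtain ⟨s, hs, rfl⟩ := Finset.mem_image.1 hs'
      obtain ⟨x', hx', hp⟩ := rtg_some_down (fun a c h => some_edge_image h) hpath
      obtain rfl : x = x' := by simpa using hx'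
      exact ⟨s, hs, hp⟩
  · rintro ⟨s, hs, hpath⟩
    refine ⟨some s, Finset.mem_insert_of_mem (Finset.mem_image_of_mem _ hs), ?_⟩
    exact rtg_lift (fun a b hab => Finset.mem_image_of_mem fE hab) hpath

lemma reaches_ins [DecidableEq V] {L₀ : Finset (V × V)} {S₀ : Finset V} {v x : V} :
    Reaches (insert ((none : Option V), (some v : Option V)) (L₀.image fE))
      (insert (none : Option V) (S₀.image (fun w => (some w : Option V))))
      (some x) ↔ Reaches L₀ (insert v S₀) x := by
  constructor
  · rintro ⟨s', hs', hpath⟩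
    rcases Finset.mem_insert.1 hs' with rfl | hs'
    · rcases rtg_none_ins hpath with h | ⟨x', hx', hp⟩
      · exact absurd h (by simp)
      · obtain rfl : x = x' := by simpa using hx'
        exact ⟨v, Finset.mem_insert_self _ _, hp⟩
    · obtain ⟨s, hs, rfl⟩ := Finset.mem_image.1 hs'
      obtain ⟨x', hx', hp⟩ := rtg_some_down (fun a c h => some_edge_ins h) hpath
      obtain rfl : x = x' := by simpa using hx'
      exact ⟨s, Finset.mem_insert_of_mem hs, hp⟩
  · rintro ⟨s, hs, hpath⟩
    have hlift := rtg_lift (L' := insert ((none : Option V), (some v : Option V))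
      (L₀.image fE)) (fun a b hab => Finset.mem_insert_of_mem
        (Finset.mem_image_of_mem fE hab)) hpath
    rcases Finset.mem_insert.1 hs with rfl | hs
    · refine ⟨none, Finset.mem_insert_self _ _, ?_⟩
      exact Relation.ReflTransGen.head (Finset.mem_insert_self _ _) hlift
    · exact ⟨some s, Finset.mem_insert_of_mem (Finset.mem_image_of_mem _ hs), hlift⟩

lemma ext_not_mem_image [DecidableEq V] {v : V} (L₀ : Finset (V × V)) :
    ((none : Option V), (some v : Option V)) ∉ L₀.image fE := by
  intro h
  obtain ⟨e, -, heq⟩ := Finset.mem_image.1 h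
  simp [fE, Prod.ext_iff] at heq

lemma extP_fE (p : V × V → ℝ) (v : V) (q : ℝ) (e : V × V) :
    extP p v q (fE e) = p e := rfl

lemma extP_ext (p : V × V → ℝ) (v : V) (q : ℝ) :
    extP p v q ((none : Option V), (some v : Option V)) = q := by
  simp [extP]

lemma weight_image [DecidableEq V] (E₀ L₀ : Finset (V × V)) (hL : L₀ ⊆ E₀)
    (p : V × V → ℝ) (v : V) (q : ℝ) :
    edgeWeight (insert ((none : Option V), (some v : Option V)) (E₀.image fE))
      (extP p v q) (L₀.image fE) = (1 - q) * edgeWeight E₀ p L₀ := by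
  unfold edgeWeight
  have hsd : insert ((none : Option V), (some v : Option V)) (E₀.image fE)
      \ (L₀.image fE)
      = insert ((none : Option V), (some v : Option V)) ((E₀ \ L₀).image fE) := by
    rw [Finset.insert_sdiff_of_notMem _ (ext_not_mem_image L₀),
      Finset.image_sdiff _ _ fE_inj]
  rw [hsd, Finset.prod_insert (ext_not_mem_image _),
    Finset.prod_image (fun a _ b _ h => fE_inj h),
    Finset.prod_image (fun a _ b _ h => fE_inj h), extP_ext]
  simp only [extP_fE]
  ring

lemma weight_ins [DecidableEq V] (E₀ L₀ : Finset (V × V)) (hL : L₀ ⊆ E₀)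
    (p : V × V → ℝ) (v : V) (q : ℝ) :
    edgeWeight (insert ((none : Option V), (some v : Option V)) (E₀.image fE))
      (extP p v q)
      (insert ((none : Option V), (some v : Option V)) (L₀.image fE))
      = q * edgeWeight E₀ p L₀ := by
  unfold edgeWeight
  have hsd : insert ((none : Option V), (some v : Option V)) (E₀.image fE)
      \ insert ((none : Option V), (some v : Option V)) (L₀.image fE)
      = (E₀ \ L₀).image fE := by
    rw [Finset.image_sdiff _ _ fE_inj]
    ext e
    simp only [Finset.mem_sdiff, Finset.mem_insert]
    constructor
    · rintro ⟨rfl | he, hne⟩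
      · exact absurd (Or.inl rfl) hne
      · exact ⟨he, fun h => hne (Or.inr h)⟩
    · rintro ⟨he, hne⟩
      refine ⟨Or.inr he, ?_⟩
      rintro (rfl | h)
      · exact ext_not_mem_image E₀ he
      · exact hne h
  rw [hsd, Finset.prod_insert (ext_not_mem_image _),
    Finset.prod_image (fun a _ b _ h => fE_inj h),
    Finset.prod_image (fun a _ b _ h => fE_inj h), extP_ext]
  simp only [extP_fE]
  ring

lemma card_filter_image [DecidableEq V] (W : Finset V) (P : Option V → Prop)
    (P₀ : V → Prop) (h : ∀ x, P (some x) ↔ P₀ x) :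
    (((W.image (fun w => (some w : Option V))).filter P).card : ℝ)
      = ((W.filter P₀).card : ℝ) := by
  rw [Finset.filter_image]
  rw [Finset.card_image_of_injective _ (fun a b => by simp)]
  congr 2
  exact Finset.filter_congr (fun x _ => h x)

lemma spread_ext [Fintype V] [DecidableEq V] (E₀ : Finset (V × V))
    (p : V × V → ℝ) (S₀ W : Finset V) (v : V) (q : ℝ) :
    spreadOn (insert ((none : Option V), (some v : Option V)) (E₀.image fE))
      (extP p v q)
      (insert (none : Option V) (S₀.image (fun w => (some w : Option V))))
      (W.image (fun w => (some w : Option V)))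
      = (1 - q) * spreadOn E₀ p S₀ W + q * spreadOn E₀ p (insert v S₀) W := by
  unfold spreadOn
  rw [Finset.sum_powerset_insert (ext_not_mem_image E₀)]
  rw [powerset_image_eq]
  rw [Finset.sum_image (fun a _ b _ h => Finset.image_injective fE_inj h),
    Finset.sum_image (fun a _ b _ h => Finset.image_injective fE_inj h)]
  rw [Finset.mul_sum, Finset.mul_sum, ← Finset.sum_add_distrib,
    ← Finset.sum_add_distrib]
  refine Finset.sum_congr rfl ?_
  intro L₀ hL₀
  have hL : L₀ ⊆ E₀ := Finset.mem_powerset.1 hL₀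
  rw [weight_image E₀ L₀ hL, weight_ins E₀ L₀ hL]
  rw [card_filter_image W _ _ (fun x => reaches_image),
    card_filter_image W _ _ (fun x => reaches_ins)]
  ring

end AffineAux

/-- Linearity of the expected activated count in the external influence
probability: if, in addition to the live-edge process inside `G_{v\u}` (seeds
`S ∩ V(G_{v\u})`), node `v` receives external influence independently with
probability `q`, then the expected number of activated nodes in `G_{v\u}` equals
`E₀ + q · g_B(v\u)`, where `E₀` is the expected number of activated nodes in
`G_{v\u}` with seed set `S ∩ V(G_{v\u})` alone. -/
theorem expected_count_affine_in_external [Fintype V] [DecidableEq V]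
    (T : SimpleGraph V) [DecidableRel T.Adj] (hT : T.IsTree)
    (p p' : V × V → ℝ)
    (hp0 : ∀ e, 0 ≤ p e) (hpp' : ∀ e, p e ≤ p' e) (hp'1 : ∀ e, p' e ≤ 1)
    (S B : Finset V) (u v : V) (hv : T.Adj u v)
    (q : ℝ) (hq0 : 0 ≤ q) (hq1 : q ≤ 1) :
    spreadOn (extEdges (treeEdges T) v u) (extP (pB p p' B) v q)
        (insert (none : Option V)
          (((S ∩ comp (treeEdges T \ {(u, v), (v, u)}) v).image
            (fun w => (some w : Option V)))))
        ((comp (treeEdges T \ {(u, v), (v, u)}) v).image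
          (fun w => (some w : Option V))) =
      spreadOn (treeEdges T \ {(u, v), (v, u)}) (pB p p' B)
          (S ∩ comp (treeEdges T \ {(u, v), (v, u)}) v)
          (comp (treeEdges T \ {(u, v), (v, u)}) v)
        + q * gain (treeEdges T) (pB p p' B) S v u := by
  have hE : extEdges (treeEdges T) v u
      = insert ((none : Option V), (some v : Option V))
        ((treeEdges T \ {(u, v), (v, u)}).image AffineAux.fE) := by
    rw [extEdges, Finset.union_comm]
    rfl
  rw [hE, AffineAux.spread_ext]
  rw [gain]
  ring

end
end
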